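/- arXiv:1309.3518 — 4 statements merged into one kernel-verified Lean document; each statement's English description precedes it below -/
import Mathlib

section
/- Let α ∈ [0,1) and ρ > 0. There is a constant C = C(α) > 0, independent of ρ, such that for every measurable function g : (0,∞) → [0,∞), ∫_0^∞ ( ∫_0^t ρ e^{−(t−s)ρ} g(s) ds )² t^{−α} dt ≤ C ∫_0^∞ g(t)² t^{−α} dt. -/
open MeasureTheory Real
open scoped ENNReal NNReal

noncomputable section

lemma mass_Ioi {ρ : ℝ} (hρ : 0 < ρ) (s : ℝ) :
    ∫⁻ t in Set.Ioi s, ENNReal.ofReal (ρ * Real.exp (-(t - s) * ρ)) = 1 := by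
  have hint : IntegrableOn (fun t => ρ * Real.exp (-(t - s) * ρ)) (Set.Ioi s) := by
    have h := (exp_neg_integrableOn_Ioi s hρ).const_mul (ρ * Real.exp (s * ρ))
    refine (integrableOn_congr_fun (fun t ht => ?_) measurableSet_Ioi).mpr h
    rw [mul_assoc, ← Real.exp_add]
    ring_nf
  have heq : ∫ t in Set.Ioi s, ρ * Real.exp (-(t - s) * ρ) = 1 := by
    have h := integral_Ioi_of_hasDerivAt_of_tendsto' (f := fun t => -Real.exp (-(t - s) * ρ))
      (f' := fun t => ρ * Real.exp (-(t - s) * ρ)) (a := s) (m := 0)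
      (fun x _ => by
        have : HasDerivAt (fun t : ℝ => -(t - s) * ρ) (-ρ) x := by
          simpa using (((hasDerivAt_id x).sub_const s).neg.mul_const ρ)
        have h2 := (this.exp).neg
        convert h2 using 1
        · rfl
        ring)
      hint ?_
    · rw [h]; simp
    · have h1 : Filter.Tendsto (fun t : ℝ => -(t - s) * ρ) Filter.atTop Filter.atBot := by
        apply Filter.Tendsto.atBot_mul_const hρ
        apply Filter.tendsto_neg_atBot_iff.mpr
        exact Filter.tendsto_atTop_add_const_right _ (-s) Filter.tendsto_id
      have := (Real.tendsto_exp_atBot.comp h1).neg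
      simpa using this
  rw [← ofReal_integral_eq_lintegral_ofReal hint]
  · rw [heq]; simp
  · filter_upwards with t
    positivity

lemma mass_Ioo {ρ : ℝ} (hρ : 0 < ρ) {a t : ℝ} (hat : a ≤ t) :
    ∫⁻ s in Set.Ioo a t, ENNReal.ofReal (ρ * Real.exp (-(t - s) * ρ)) ≤ 1 := by
  have hcont : Continuous (fun s : ℝ => ρ * Real.exp (-(t - s) * ρ)) := by continuity
  have hle : ∫⁻ s in Set.Ioo a t, ENNReal.ofReal (ρ * Real.exp (-(t - s) * ρ)) ≤
      ∫⁻ s in Set.Ioc a t, ENNReal.ofReal (ρ * Real.exp (-(t - s) * ρ)) :=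
    lintegral_mono_set Set.Ioo_subset_Ioc_self
  refine hle.trans ?_
  have hint : IntegrableOn (fun s => ρ * Real.exp (-(t - s) * ρ)) (Set.Ioc a t) :=
    (hcont.integrableOn_Ioc)
  rw [← ofReal_integral_eq_lintegral_ofReal hint (by filter_upwards with s; positivity)]
  have hftc : ∫ s in a..t, ρ * Real.exp (-(t - s) * ρ) =
      Real.exp (-(t - t) * ρ) - Real.exp (-(t - a) * ρ) := by
    refine intervalIntegral.integral_eq_sub_of_hasDerivAt (f := fun s => Real.exp (-(t - s) * ρ)) (fun x _ => ?_)
      (hcont.intervalIntegrable a t)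
    have h1 : HasDerivAt (fun s : ℝ => -(t - s) * ρ) ρ x := by
      simpa using (((hasDerivAt_id x).const_sub t).neg.mul_const ρ)
    have := h1.exp
    exact this.congr_deriv (by ring)
  rw [← intervalIntegral.integral_of_le hat, hftc]
  rw [show -(t - t) * ρ = 0 by ring, Real.exp_zero]
  refine (ENNReal.ofReal_le_one).mpr ?_
  have := Real.exp_pos (-(t - a) * ρ)
  linarith

lemma lint_rpow {α : ℝ} (hα1 : α < 1) {b : ℝ} (hb : 0 < b) :
    ∫⁻ s in Set.Ioc (0:ℝ) b, ENNReal.ofReal (s ^ (-α)) =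
      ENNReal.ofReal (b ^ (1 - α) / (1 - α)) := by
  have hint : IntegrableOn (fun s : ℝ => s ^ (-α)) (Set.Ioc 0 b) := by
    have h := (intervalIntegral.intervalIntegrable_rpow' (a := 0) (b := b) (r := -α)
      (by linarith)).1
    exact h
  rw [← ofReal_integral_eq_lintegral_ofReal hint ?_]
  · congr 1
    rw [← intervalIntegral.integral_of_le hb.le, integral_rpow (Or.inl (by linarith))]
    rw [Real.zero_rpow (by linarith : -α + 1 ≠ 0)]
    norm_num
    rw [show -α + 1 = 1 - α by ring]
  · filter_upwards [ae_restrict_mem measurableSet_Ioc] with s hs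
    exact Real.rpow_nonneg hs.1.le _

lemma kernelA {ρ α : ℝ} (hρ : 0 < ρ) (hα0 : 0 ≤ α) (hα1 : α < 1) {t : ℝ} (ht : 0 < t) :
    ∫⁻ s in Set.Ioo (0:ℝ) t, ENNReal.ofReal (ρ * Real.exp (-(t - s) * ρ) * s ^ (-α)) ≤
      ENNReal.ofReal ((2:ℝ) ^ α * (1 + 1 / (1 - α))) * ENNReal.ofReal (t ^ (-α)) := by
  have h1α : (0:ℝ) < 1 - α := by linarith
  set b := t / 2 with hbdef
  have hb : 0 < b := by positivity
  have hbt : b < t := by simp [hbdef]; linarith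
  have hb2 : b ^ (-α) = 2 ^ α * t ^ (-α) := by
    rw [hbdef, Real.div_rpow ht.le (by norm_num : (0:ℝ) ≤ 2), Real.rpow_neg ht.le,
      Real.rpow_neg (by norm_num : (0:ℝ) ≤ 2), div_eq_mul_inv, inv_inv]
    ring
  have hsplit : Set.Ioo (0:ℝ) t = Set.Ioc 0 b ∪ Set.Ioo b t := (Set.Ioc_union_Ioo_eq_Ioo hb.le hbt).symm
  have hdisj : Disjoint (Set.Ioc (0:ℝ) b) (Set.Ioo b t) := by
    rw [Set.disjoint_left]
    rintro x ⟨_, h1⟩ ⟨h2, _⟩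
    exact absurd h1 (not_le.mpr h2)
  rw [hsplit, lintegral_union measurableSet_Ioo hdisj]
  -- part 1
  have key : ρ * b * Real.exp (-(b * ρ)) ≤ 1 := by
    have h1 : b * ρ + 1 ≤ Real.exp (b * ρ) := Real.add_one_le_exp _
    have hmul : Real.exp (-(b * ρ)) * Real.exp (b * ρ) = 1 := by
      rw [← Real.exp_add]; simp
    nlinarith [Real.exp_pos (-(b * ρ)), mul_le_mul_of_nonneg_right
      (show b * ρ ≤ Real.exp (b * ρ) - 1 by linarith) (Real.exp_pos (-(b * ρ))).le]
  have h1 : ∫⁻ s in Set.Ioc (0:ℝ) b, ENNReal.ofReal (ρ * Real.exp (-(t - s) * ρ) * s ^ (-α)) ≤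
      ENNReal.ofReal ((2:ℝ) ^ α / (1 - α)) * ENNReal.ofReal (t ^ (-α)) := by
    have hmono : ∫⁻ s in Set.Ioc (0:ℝ) b, ENNReal.ofReal (ρ * Real.exp (-(t - s) * ρ) * s ^ (-α)) ≤
        ∫⁻ s in Set.Ioc (0:ℝ) b, ENNReal.ofReal (ρ * Real.exp (-(b * ρ))) * ENNReal.ofReal (s ^ (-α)) := by
      refine setLIntegral_mono_ae (by fun_prop) ?_
      filter_upwards with s hs
      rw [← ENNReal.ofReal_mul (by positivity)]
      refine ENNReal.ofReal_le_ofReal ?_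
      have hsp : (0:ℝ) < s := hs.1
      have hexp : Real.exp (-(t - s) * ρ) ≤ Real.exp (-(b * ρ)) := by
        apply Real.exp_le_exp.mpr
        have : b ≤ t - s := by simp [hbdef] at hs ⊢; linarith [hs.2]
        nlinarith
      have hnn : (0:ℝ) ≤ s ^ (-α) := Real.rpow_nonneg hsp.le _
      exact mul_le_mul_of_nonneg_right (mul_le_mul_of_nonneg_left hexp hρ.le) hnn
    refine hmono.trans ?_
    rw [lintegral_const_mul' _ _ ENNReal.ofReal_ne_top, lint_rpow hα1 hb,
      ← ENNReal.ofReal_mul (by positivity)]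
    rw [← ENNReal.ofReal_mul (by positivity)]
    refine ENNReal.ofReal_le_ofReal ?_
    have hsplit2 : b ^ (1 - α) = b * b ^ (-α) := by
      rw [show (1:ℝ) - α = 1 + -α by ring, Real.rpow_add hb, Real.rpow_one]
    rw [hsplit2, hb2]
    calc ρ * Real.exp (-(b * ρ)) * (b * (2 ^ α * t ^ (-α)) / (1 - α))
        = (ρ * b * Real.exp (-(b * ρ))) * (2 ^ α * t ^ (-α) / (1 - α)) := by ring
      _ ≤ 1 * (2 ^ α * t ^ (-α) / (1 - α)) := by
          refine mul_le_mul_of_nonneg_right key ?_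
          have := Real.rpow_nonneg ht.le (-α)
          have h2 := Real.rpow_nonneg (by norm_num : (0:ℝ) ≤ 2) α
          positivity
      _ = 2 ^ α / (1 - α) * t ^ (-α) := by ring
  -- part 2
  have h2 : ∫⁻ s in Set.Ioo b t, ENNReal.ofReal (ρ * Real.exp (-(t - s) * ρ) * s ^ (-α)) ≤
      ENNReal.ofReal ((2:ℝ) ^ α) * ENNReal.ofReal (t ^ (-α)) := by
    have hmono : ∫⁻ s in Set.Ioo b t, ENNReal.ofReal (ρ * Real.exp (-(t - s) * ρ) * s ^ (-α)) ≤
        ∫⁻ s in Set.Ioo b t, ENNReal.ofReal (b ^ (-α)) * ENNReal.ofReal (ρ * Real.exp (-(t - s) * ρ)) := by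
      refine setLIntegral_mono_ae (by fun_prop) ?_
      filter_upwards with s hs
      rw [← ENNReal.ofReal_mul (Real.rpow_nonneg hb.le _)]
      refine ENNReal.ofReal_le_ofReal ?_
      have hrp : s ^ (-α) ≤ b ^ (-α) :=
        Real.rpow_le_rpow_of_nonpos hb hs.1.le (by linarith)
      have hK : (0:ℝ) ≤ ρ * Real.exp (-(t - s) * ρ) := by positivity
      nlinarith
    refine hmono.trans ?_
    rw [lintegral_const_mul' _ _ ENNReal.ofReal_ne_top]
    calc ENNReal.ofReal (b ^ (-α)) * ∫⁻ s in Set.Ioo b t, ENNReal.ofReal (ρ * Real.exp (-(t - s) * ρ))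
        ≤ ENNReal.ofReal (b ^ (-α)) * 1 := by
          exact mul_le_mul_right (mass_Ioo hρ hbt.le) _
      _ = ENNReal.ofReal (2 ^ α * t ^ (-α)) := by rw [mul_one, hb2]
      _ = ENNReal.ofReal ((2:ℝ) ^ α) * ENNReal.ofReal (t ^ (-α)) := by
          rw [ENNReal.ofReal_mul (Real.rpow_nonneg (by norm_num) _)]
  refine (add_le_add h1 h2).trans ?_
  rw [← add_mul, ← ENNReal.ofReal_add (by positivity) (Real.rpow_nonneg (by norm_num) _)]
  refine mul_le_mul_left (ENNReal.ofReal_le_ofReal ?_) _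
  rw [mul_add, mul_one, mul_one_div]
  linarith

lemma CS {ρ α : ℝ} (hρ : 0 ≤ ρ) {g : ℝ → ℝ} (hg : Measurable g) (hgnn : ∀ s, 0 ≤ g s) (t : ℝ) :
    (∫⁻ s in Set.Ioo (0:ℝ) t, ENNReal.ofReal (ρ * Real.exp (-(t - s) * ρ) * g s)) ^ 2 ≤
      (∫⁻ s in Set.Ioo (0:ℝ) t, ENNReal.ofReal (ρ * Real.exp (-(t - s) * ρ) * s ^ (-α))) *
      (∫⁻ s in Set.Ioo (0:ℝ) t, ENNReal.ofReal (ρ * Real.exp (-(t - s) * ρ) * s ^ α * g s ^ 2)) := by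
  set K : ℝ → ℝ := fun s => ρ * Real.exp (-(t - s) * ρ) with hK
  have hKm : Measurable K := by fun_prop
  set F : ℝ → ℝ≥0∞ := fun s => ENNReal.ofReal (Real.sqrt (K s * s ^ (-α))) with hF
  set G : ℝ → ℝ≥0∞ := fun s => ENNReal.ofReal (Real.sqrt (K s * s ^ α) * g s) with hG
  have hFm : AEMeasurable F (volume.restrict (Set.Ioo (0:ℝ) t)) := by fun_prop
  have hGm : AEMeasurable G (volume.restrict (Set.Ioo (0:ℝ) t)) := by fun_prop
  have hpq : Real.HolderConjugate 2 2 := ⟨by norm_num, by norm_num, by norm_num⟩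
  have hH := ENNReal.lintegral_mul_le_Lp_mul_Lq (volume.restrict (Set.Ioo (0:ℝ) t)) hpq hFm hGm
  -- identify F * G
  have hFG : ∀ᵐ s ∂(volume.restrict (Set.Ioo (0:ℝ) t)),
      (F * G) s = ENNReal.ofReal (K s * g s) := by
    filter_upwards [ae_restrict_mem measurableSet_Ioo] with s hs
    have hsp : (0:ℝ) < s := hs.1
    have hKs : 0 ≤ K s := by rw [hK]; positivity
    simp only [Pi.mul_apply, hF, hG]
    rw [← ENNReal.ofReal_mul (Real.sqrt_nonneg _), ← mul_assoc,
      ← Real.sqrt_mul (by positivity)]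
    congr 2
    · rw [show K s * s ^ (-α) * (K s * s ^ α) = (K s)^2 * (s ^ (-α) * s ^ α) by ring,
        ← Real.rpow_add hsp]
      simp [Real.sqrt_sq hKs]
  have hF2 : ∀ᵐ s ∂(volume.restrict (Set.Ioo (0:ℝ) t)),
      F s ^ (2:ℝ) = ENNReal.ofReal (K s * s ^ (-α)) := by
    filter_upwards [ae_restrict_mem measurableSet_Ioo] with s hs
    have hsp : (0:ℝ) < s := hs.1
    have h0 : 0 ≤ K s * s ^ (-α) := by
      have : 0 ≤ K s := by rw [hK]; positivity
      have := Real.rpow_nonneg hsp.le (-α)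
      positivity
    show ENNReal.ofReal (Real.sqrt (K s * s ^ (-α))) ^ (2:ℝ) = _
    rw [ENNReal.ofReal_rpow_of_nonneg (Real.sqrt_nonneg _) (by norm_num)]
    congr 1
    rw [show ((2:ℝ)) = ((2:ℕ):ℝ) by norm_num, Real.rpow_natCast, Real.sq_sqrt h0]
  have hG2 : ∀ᵐ s ∂(volume.restrict (Set.Ioo (0:ℝ) t)),
      G s ^ (2:ℝ) = ENNReal.ofReal (K s * s ^ α * g s ^ 2) := by
    filter_upwards [ae_restrict_mem measurableSet_Ioo] with s hs
    have hsp : (0:ℝ) < s := hs.1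
    have hKs : 0 ≤ K s := by rw [hK]; positivity
    have h0 : 0 ≤ K s * s ^ α := by
      have := Real.rpow_nonneg hsp.le α
      positivity
    show ENNReal.ofReal (Real.sqrt (K s * s ^ α) * g s) ^ (2:ℝ) = _
    rw [ENNReal.ofReal_rpow_of_nonneg (mul_nonneg (Real.sqrt_nonneg _) (hgnn s)) (by norm_num)]
    congr 1
    rw [show ((2:ℝ)) = ((2:ℕ):ℝ) by norm_num, Real.rpow_natCast]
    rw [mul_pow, Real.sq_sqrt h0, mul_assoc]
  rw [lintegral_congr_ae hFG, lintegral_congr_ae hF2, lintegral_congr_ae hG2] at hH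
  -- square both sides
  have hsq : ∀ X Y : ℝ≥0∞, (X ^ ((1:ℝ)/2) * Y ^ ((1:ℝ)/2)) ^ (2:ℕ) = X * Y := by
    intro X Y
    rw [mul_pow, ← ENNReal.rpow_natCast (X ^ _) 2, ← ENNReal.rpow_natCast (Y ^ _) 2,
      ← ENNReal.rpow_mul, ← ENNReal.rpow_mul]
    norm_num
  have h2 := pow_le_pow_left₀ zero_le hH 2
  exact h2.trans_eq (hsq _ _)

lemma tonelli {H : ℝ → ℝ → ℝ≥0∞} (hH : Measurable (Function.uncurry H)) :
    ∫⁻ t in Set.Ioi (0:ℝ), ∫⁻ s in Set.Ioo (0:ℝ) t, H t s =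
      ∫⁻ s in Set.Ioi (0:ℝ), ∫⁻ t in Set.Ioi s, H t s := by
  set F : ℝ → ℝ → ℝ≥0∞ := fun t s => if 0 < s ∧ s < t then H t s else 0 with hFdef
  have hFm : Measurable (Function.uncurry F) := by
    have hS : MeasurableSet {p : ℝ × ℝ | 0 < p.2 ∧ p.2 < p.1} :=
      (measurableSet_lt measurable_const measurable_snd).inter
        (measurableSet_lt measurable_snd measurable_fst)
    exact Measurable.ite hS hH measurable_const
  have step1 : ∀ t : ℝ, ∫⁻ s in Set.Ioo (0:ℝ) t, H t s = ∫⁻ s, F t s := by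
    intro t
    rw [← lintegral_indicator measurableSet_Ioo]
    refine lintegral_congr fun s => ?_
    simp only [Set.indicator_apply, Set.mem_Ioo, hFdef]
  have step2 : ∫⁻ t in Set.Ioi (0:ℝ), ∫⁻ s, F t s = ∫⁻ t, ∫⁻ s, F t s := by
    rw [← lintegral_indicator measurableSet_Ioi]
    refine lintegral_congr fun t => ?_
    rw [Set.indicator_apply]
    split_ifs with ht
    · rfl
    · symm
      have : ∀ s, F t s = 0 := by
        intro s
        simp only [hFdef, ite_eq_right_iff]
        rintro ⟨h1, h2⟩
        exact absurd (h1.trans h2) (by simpa using ht)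
      simp only [this, lintegral_zero]
  have step3 := lintegral_lintegral_swap (μ := volume) (ν := volume) hFm.aemeasurable
  have step4 : ∫⁻ s, ∫⁻ t, F t s = ∫⁻ s in Set.Ioi (0:ℝ), ∫⁻ t in Set.Ioi s, H t s := by
    rw [← lintegral_indicator measurableSet_Ioi]
    refine lintegral_congr fun s => ?_
    rw [Set.indicator_apply]
    split_ifs with hs
    · rw [← lintegral_indicator measurableSet_Ioi]
      refine lintegral_congr fun t => ?_
      simp only [hFdef, Set.indicator_apply, Set.mem_Ioi]
      rw [Set.mem_Ioi] at hs
      by_cases hst : s < t <;> simp [hst, hs]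
    · have : ∀ t, F t s = 0 := by
        intro t
        simp only [hFdef, ite_eq_right_iff]
        rintro ⟨h1, h2⟩
        exact absurd h1 (by simpa using hs)
      simp only [this, lintegral_zero]
  calc ∫⁻ t in Set.Ioi (0:ℝ), ∫⁻ s in Set.Ioo (0:ℝ) t, H t s
      = ∫⁻ t in Set.Ioi (0:ℝ), ∫⁻ s, F t s := by
        refine setLIntegral_congr_fun measurableSet_Ioi ?_
        intro t _
        exact step1 t
    _ = ∫⁻ t, ∫⁻ s, F t s := step2
    _ = ∫⁻ s, ∫⁻ t, F t s := step3
    _ = ∫⁻ s in Set.Ioi (0:ℝ), ∫⁻ t in Set.Ioi s, H t s := step4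

/-- The scalar Schur-test inequality: for `α ∈ [0,1)` there is `C = C(α) > 0`,
independent of `ρ > 0`, such that for every measurable `g : (0,∞) → [0,∞)`,
`∫_0^∞ (∫_0^t ρ e^{−(t−s)ρ} g(s) ds)² t^{−α} dt ≤ C ∫_0^∞ g(t)² t^{−α} dt`. -/
theorem schur_scalar_bound (α : ℝ) (hα0 : 0 ≤ α) (hα1 : α < 1) :
    ∃ C > (0 : ℝ), ∀ ρ > (0 : ℝ), ∀ g : ℝ → ℝ, Measurable g → (∀ t, 0 ≤ g t) →
      ∫⁻ t in Set.Ioi (0 : ℝ),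
          (∫⁻ s in Set.Ioo (0 : ℝ) t,
            ENNReal.ofReal (ρ * Real.exp (-(t - s) * ρ) * g s)) ^ 2 *
          ENNReal.ofReal (t ^ (-α)) ≤
        ENNReal.ofReal C *
          ∫⁻ t in Set.Ioi (0 : ℝ),
            ENNReal.ofReal (g t) ^ 2 * ENNReal.ofReal (t ^ (-α)) := by
  have h1α : (0:ℝ) < 1 - α := by linarith
  set C : ℝ := (2:ℝ) ^ α * (1 + 1 / (1 - α)) with hC
  have hCpos : 0 < C := by
    have := Real.rpow_pos_of_pos (by norm_num : (0:ℝ) < 2) α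
    positivity
  refine ⟨C, hCpos, fun ρ hρ g hg hgnn => ?_⟩
  set H : ℝ → ℝ → ℝ≥0∞ := fun t s =>
    ENNReal.ofReal (ρ * Real.exp (-(t - s) * ρ) * s ^ α * g s ^ 2) *
      ENNReal.ofReal (t ^ (-α)) ^ 2 with hHdef
  have hHm : Measurable (Function.uncurry H) := by
    unfold Function.uncurry
    fun_prop
  -- Step 1: pointwise CS + kernel bound
  have step1 : ∫⁻ t in Set.Ioi (0 : ℝ),
      (∫⁻ s in Set.Ioo (0 : ℝ) t,
        ENNReal.ofReal (ρ * Real.exp (-(t - s) * ρ) * g s)) ^ 2 *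
      ENNReal.ofReal (t ^ (-α)) ≤
      ENNReal.ofReal C * ∫⁻ t in Set.Ioi (0:ℝ), ∫⁻ s in Set.Ioo (0:ℝ) t, H t s := by
    rw [← lintegral_const_mul' _ _ ENNReal.ofReal_ne_top]
    refine lintegral_mono_ae ?_
    filter_upwards [ae_restrict_mem measurableSet_Ioi] with t ht
    rw [Set.mem_Ioi] at ht
    have hcs := CS (α := α) hρ.le hg hgnn t
    have hker := kernelA hρ hα0 hα1 ht
    calc (∫⁻ s in Set.Ioo (0 : ℝ) t,
          ENNReal.ofReal (ρ * Real.exp (-(t - s) * ρ) * g s)) ^ 2 *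
          ENNReal.ofReal (t ^ (-α))
        ≤ ((ENNReal.ofReal C * ENNReal.ofReal (t ^ (-α))) *
            (∫⁻ s in Set.Ioo (0:ℝ) t,
              ENNReal.ofReal (ρ * Real.exp (-(t - s) * ρ) * s ^ α * g s ^ 2))) *
            ENNReal.ofReal (t ^ (-α)) := by
          refine mul_le_mul_left (hcs.trans (mul_le_mul_left hker _)) _
      _ = ENNReal.ofReal C * ((∫⁻ s in Set.Ioo (0:ℝ) t,
              ENNReal.ofReal (ρ * Real.exp (-(t - s) * ρ) * s ^ α * g s ^ 2)) *
            ENNReal.ofReal (t ^ (-α)) ^ 2) := by ring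
      _ = ENNReal.ofReal C * ∫⁻ s in Set.Ioo (0:ℝ) t, H t s := by
          rw [← lintegral_mul_const' _ _ (ENNReal.pow_ne_top ENNReal.ofReal_ne_top)]
  -- Step 2: Tonelli + inner bound
  have step2 : ∫⁻ t in Set.Ioi (0:ℝ), ∫⁻ s in Set.Ioo (0:ℝ) t, H t s ≤
      ∫⁻ t in Set.Ioi (0 : ℝ), ENNReal.ofReal (g t) ^ 2 * ENNReal.ofReal (t ^ (-α)) := by
    rw [tonelli hHm]
    refine lintegral_mono_ae ?_
    filter_upwards [ae_restrict_mem measurableSet_Ioi] with s hs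
    rw [Set.mem_Ioi] at hs
    have hbound : ∀ t ∈ Set.Ioi s, H t s ≤
        (ENNReal.ofReal (s ^ α * g s ^ 2) * ENNReal.ofReal (s ^ (-α)) ^ 2) *
          ENNReal.ofReal (ρ * Real.exp (-(t - s) * ρ)) := by
      intro t ht
      rw [Set.mem_Ioi] at ht
      have hts : ENNReal.ofReal (t ^ (-α)) ≤ ENNReal.ofReal (s ^ (-α)) :=
        ENNReal.ofReal_le_ofReal (Real.rpow_le_rpow_of_nonpos hs ht.le (by linarith))
      have heq : H t s = (ENNReal.ofReal (ρ * Real.exp (-(t - s) * ρ)) *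
          ENNReal.ofReal (s ^ α * g s ^ 2)) * ENNReal.ofReal (t ^ (-α)) ^ 2 := by
        show ENNReal.ofReal (ρ * Real.exp (-(t - s) * ρ) * s ^ α * g s ^ 2) *
          ENNReal.ofReal (t ^ (-α)) ^ 2 = _
        rw [← ENNReal.ofReal_mul (mul_nonneg hρ.le (Real.exp_pos _).le)]
        congr 2
        ring
      rw [heq]
      calc (ENNReal.ofReal (ρ * Real.exp (-(t - s) * ρ)) *
          ENNReal.ofReal (s ^ α * g s ^ 2)) * ENNReal.ofReal (t ^ (-α)) ^ 2
          ≤ (ENNReal.ofReal (ρ * Real.exp (-(t - s) * ρ)) *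
            ENNReal.ofReal (s ^ α * g s ^ 2)) * ENNReal.ofReal (s ^ (-α)) ^ 2 :=
            mul_le_mul_right (pow_le_pow_left' hts 2) _
        _ = (ENNReal.ofReal (s ^ α * g s ^ 2) * ENNReal.ofReal (s ^ (-α)) ^ 2) *
            ENNReal.ofReal (ρ * Real.exp (-(t - s) * ρ)) := by ring
    calc ∫⁻ t in Set.Ioi s, H t s
        ≤ ∫⁻ t in Set.Ioi s, (ENNReal.ofReal (s ^ α * g s ^ 2) *
            ENNReal.ofReal (s ^ (-α)) ^ 2) * ENNReal.ofReal (ρ * Real.exp (-(t - s) * ρ)) := by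
          refine lintegral_mono_ae ?_
          filter_upwards [ae_restrict_mem measurableSet_Ioi] with t ht
          exact hbound t ht
      _ = (ENNReal.ofReal (s ^ α * g s ^ 2) * ENNReal.ofReal (s ^ (-α)) ^ 2) *
            ∫⁻ t in Set.Ioi s, ENNReal.ofReal (ρ * Real.exp (-(t - s) * ρ)) := by
          rw [lintegral_const_mul' _ _
            (ENNReal.mul_ne_top ENNReal.ofReal_ne_top (ENNReal.pow_ne_top ENNReal.ofReal_ne_top))]
      _ = ENNReal.ofReal (s ^ α * g s ^ 2) * ENNReal.ofReal (s ^ (-α)) ^ 2 := by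
          rw [mass_Ioi hρ, mul_one]
      _ = ENNReal.ofReal (g s) ^ 2 * ENNReal.ofReal (s ^ (-α)) := by
          rw [← ENNReal.ofReal_pow (Real.rpow_nonneg hs.le _),
            ← ENNReal.ofReal_mul (mul_nonneg (Real.rpow_nonneg hs.le _) (sq_nonneg _)),
            ← ENNReal.ofReal_pow (hgnn s),
            ← ENNReal.ofReal_mul (sq_nonneg _)]
          congr 1
          rw [show s ^ α * g s ^ 2 * (s ^ (-α)) ^ 2 =
            g s ^ 2 * (s ^ α * s ^ (-α) * s ^ (-α)) by ring,
            ← Real.rpow_add hs, ← Real.rpow_add hs,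
            show α + -α + -α = -α by ring]
  exact step1.trans (mul_le_mul_right step2 _)

end
end

section
/- Let n ≥ 2. There is a constant C = C(n) > 0 such that for every f ∈ L²_{loc}(ℝⁿ) with ‖f‖_{L_{2,n−2}} < ∞ and every t > 0, the heat extension e^{tΔ}f is defined a.e. and ‖e^{tΔ}f‖_{L_{2,n−2}} ≤ C ‖f‖_{L_{2,n−2}}; i.e., the heat semigroup is uniformly bounded on the square Morrey space L_{2,n−2}. -/
open MeasureTheory Metric Real
open scoped ENNReal NNReal

noncomputable section

/-- The heat extension `e^{tΔ}f` of a function `f : ℝⁿ → ℂ`. -/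
def heatExt (n : ℕ) (f : EuclideanSpace ℝ (Fin n) → ℂ) (t : ℝ)
    (x : EuclideanSpace ℝ (Fin n)) : ℂ :=
  ∫ y, ((4 * π * t) ^ (-(n : ℝ) / 2) * Real.exp (-‖x - y‖ ^ 2 / (4 * t))) • f y

/-- The square Morrey norm `‖f‖_{L_{2,n−2}}`. -/
def MorreyNorm (n : ℕ) (f : EuclideanSpace ℝ (Fin n) → ℂ) : ℝ≥0∞ :=
  ⨆ (r : ℝ) (_ : 0 < r) (x : EuclideanSpace ℝ (Fin n)),
    (ENNReal.ofReal (r ^ ((2 : ℝ) - (n : ℝ))) *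
      ∫⁻ y in Metric.ball x r, (‖f y‖₊ : ℝ≥0∞) ^ 2) ^ (1 / 2 : ℝ)

namespace HeatAux

variable {n : ℕ}

local notation "E" => EuclideanSpace ℝ (Fin n)

lemma expArg_meas (t : ℝ) : Measurable fun z : E => rexp (-‖z‖ ^ 2 / (4 * t)) :=
  (Real.continuous_exp.comp ((continuous_norm.pow 2).neg.div_const (4 * t))).measurable

lemma K_meas (t : ℝ) :
    Measurable fun z : E =>
      ENNReal.ofReal ((4 * π * t) ^ (-(n : ℝ) / 2) * rexp (-‖z‖ ^ 2 / (4 * t))) :=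
  (measurable_const.mul (expArg_meas t)).ennreal_ofReal

lemma K_lintegral (t : ℝ) (ht : 0 < t) :
    ∫⁻ z : E, ENNReal.ofReal ((4 * π * t) ^ (-(n : ℝ) / 2) * rexp (-‖z‖ ^ 2 / (4 * t))) = 1 := by
  have hb : (0:ℝ) < 1 / (4 * t) := by positivity
  have h4t : (0:ℝ) < 4 * π * t := by positivity
  have hint : Integrable fun z : E => rexp (-(1 / (4 * t)) * ‖z‖ ^ 2) := by
    have h := (GaussianFourier.integrable_cexp_neg_mul_sq_norm_add (V := E)
      (b := ((1 / (4 * t) : ℝ) : ℂ)) (by simpa using hb) 0 0).norm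
    refine h.congr (Filter.Eventually.of_forall fun z => ?_)
    simp [Complex.norm_exp, ← Complex.ofReal_pow]
  have heq : ∀ z : E, ENNReal.ofReal ((4 * π * t) ^ (-(n : ℝ) / 2) * rexp (-‖z‖ ^ 2 / (4 * t)))
      = ENNReal.ofReal ((4 * π * t) ^ (-(n : ℝ) / 2)) *
        ENNReal.ofReal (rexp (-(1 / (4 * t)) * ‖z‖ ^ 2)) := by
    intro z
    rw [← ENNReal.ofReal_mul (by positivity)]
    congr 2
    ring
  simp_rw [heq]
  have hm : Measurable fun z : E => ENNReal.ofReal (rexp (-(1 / (4 * t)) * ‖z‖ ^ 2)) :=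
    (Real.measurable_exp.comp ((measurable_norm.pow_const 2).const_mul (-(1 / (4 * t))))).ennreal_ofReal
  rw [lintegral_const_mul _ hm,
    ← ofReal_integral_eq_lintegral_ofReal hint
      (Filter.Eventually.of_forall fun z => Real.exp_nonneg _),
    GaussianFourier.integral_rexp_neg_mul_sq_norm (V := E) hb]
  rw [show π / (1 / (4 * t)) = 4 * π * t by field_simp]
  rw [show (Module.finrank ℝ (EuclideanSpace ℝ (Fin n)) : ℝ) = (n : ℝ) by
    rw [finrank_euclideanSpace_fin]]
  rw [← ENNReal.ofReal_mul (by positivity), ← Real.rpow_add h4t,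
    show -(n : ℝ) / 2 + (n : ℝ) / 2 = 0 by ring, Real.rpow_zero, ENNReal.ofReal_one]

end HeatAux

/-- The heat semigroup is uniformly bounded on the square Morrey space `L_{2,n−2}`:
for `f ∈ L²_loc` with finite Morrey norm and `t > 0`, the heat extension is
defined a.e. and `‖e^{tΔ}f‖_{L_{2,n−2}} ≤ C ‖f‖_{L_{2,n−2}}`. -/
theorem heat_semigroup_morrey_bounded (n : ℕ) (hn : 2 ≤ n) :
    ∃ C > (0 : ℝ), ∀ f : EuclideanSpace ℝ (Fin n) → ℂ,
      Measurable f → LocallyIntegrable (fun y => ‖f y‖ ^ 2) volume →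
      MorreyNorm n f ≠ ⊤ → ∀ t > (0 : ℝ),
        (∀ᵐ x : EuclideanSpace ℝ (Fin n),
          Integrable (fun y =>
            ((4 * π * t) ^ (-(n : ℝ) / 2) * Real.exp (-‖x - y‖ ^ 2 / (4 * t))) • f y)) ∧
        MorreyNorm n (heatExt n f t) ≤ ENNReal.ofReal C * MorreyNorm n f := by
  refine ⟨1, one_pos, fun f hf hloc hM t ht => ?_⟩
  set c : ℝ := (4 * π * t) ^ (-(n : ℝ) / 2) with hc_def
  have hc : 0 < c := Real.rpow_pos_of_pos (by positivity) _
  set K : EuclideanSpace ℝ (Fin n) → ℝ≥0∞ :=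
    fun z => ENNReal.ofReal (c * rexp (-‖z‖ ^ 2 / (4 * t))) with hK_def
  have hKmeas : Measurable K := HeatAux.K_meas t
  have hK1 : ∫⁻ z, K z = 1 := HeatAux.K_lintegral t ht
  set g : EuclideanSpace ℝ (Fin n) → ℝ≥0∞ := fun y => (‖f y‖₊ : ℝ≥0∞) ^ 2 with hg_def
  have hgmeas : Measurable g := hf.nnnorm.coe_nnreal_ennreal.pow_const 2
  set M := MorreyNorm n f with hM_def
  -- ball bound from the Morrey norm
  have hb1 : ∀ r, 0 < r → ∀ x, ENNReal.ofReal (r ^ ((2:ℝ) - (n:ℝ))) *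
      (∫⁻ y in ball x r, g y) ≤ M ^ 2 := by
    intro r hr x
    have h1 : (ENNReal.ofReal (r ^ ((2:ℝ) - (n:ℝ))) * ∫⁻ y in ball x r, g y) ^ (1/2 : ℝ) ≤ M := by
      rw [hM_def, MorreyNorm]
      exact le_iSup_of_le r (le_iSup_of_le hr (le_iSup_of_le x le_rfl))
    calc ENNReal.ofReal (r ^ ((2:ℝ) - (n:ℝ))) * ∫⁻ y in ball x r, g y
        = ((ENNReal.ofReal (r ^ ((2:ℝ) - (n:ℝ))) * ∫⁻ y in ball x r, g y) ^ (1/2 : ℝ)) ^ 2 := by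
          rw [← ENNReal.rpow_natCast _ 2, ← ENNReal.rpow_mul]
          norm_num
      _ ≤ M ^ 2 := pow_le_pow_left' h1 2
  have hb2 : ∀ r, 0 < r → ∀ x, (∫⁻ y in ball x r, g y)
      ≤ ENNReal.ofReal (r ^ ((n:ℝ) - 2)) * M ^ 2 := by
    intro r hr x
    have hcancel : ENNReal.ofReal (r ^ ((n:ℝ) - 2)) * ENNReal.ofReal (r ^ ((2:ℝ) - (n:ℝ))) = 1 := by
      rw [← ENNReal.ofReal_mul (by positivity), ← Real.rpow_add hr,
        show ((n:ℝ) - 2) + ((2:ℝ) - (n:ℝ)) = 0 by ring, Real.rpow_zero, ENNReal.ofReal_one]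
    calc ∫⁻ y in ball x r, g y
        = ENNReal.ofReal (r ^ ((n:ℝ) - 2)) *
            (ENNReal.ofReal (r ^ ((2:ℝ) - (n:ℝ))) * ∫⁻ y in ball x r, g y) := by
          rw [← mul_assoc, hcancel, one_mul]
      _ ≤ _ := mul_le_mul_right (hb1 r hr x) _
  -- pointwise finiteness of the Gaussian average of g
  have hfin : ∀ x, (∫⁻ y, K (x - y) * g y) ≠ ⊤ := by
    intro x
    set ρ : ℝ := rexp (-(1 / (4 * t))) with hρ_def
    have hρ0 : 0 < ρ := Real.exp_pos _
    have hρ1 : ρ < 1 := Real.exp_lt_one_iff.2 (by rw [neg_lt, neg_zero]; positivity)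
    set k := n - 2 with hk_def
    have hkc : ((k : ℝ)) = (n : ℝ) - 2 := by
      rw [hk_def]; push_cast [Nat.cast_sub hn]; ring
    have hsum0 : Summable (fun m : ℕ => (m : ℝ) ^ k * ρ ^ m) :=
      summable_pow_mul_geometric_of_norm_lt_one k
        (by rwa [Real.norm_eq_abs, abs_of_pos hρ0])
    have hsum1 : Summable (fun j : ℕ => ((j : ℝ) + 1) ^ k * ρ ^ (j + 1)) := by
      have h2 := (summable_nat_add_iff (f := fun m : ℕ => (m : ℝ) ^ k * ρ ^ m) 1).2 hsum0
      refine h2.congr fun j => ?_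
      push_cast
      ring
    have hsumb : Summable (fun j : ℕ => c * (((j : ℝ) + 1) ^ k * ρ ^ j)) := by
      have h2 := hsum1.mul_left (c / ρ)
      refine h2.congr fun j => ?_
      field_simp
      ring
    have hterm : ∀ j : ℕ, (∫⁻ y in ball x ((j:ℝ)+1) \ ball x (j:ℝ), K (x - y) * g y)
        ≤ ENNReal.ofReal (c * (((j:ℝ)+1) ^ k * ρ ^ j)) * M ^ 2 := by
      intro j
      have hKb : ∀ y ∈ ball x ((j:ℝ)+1) \ ball x (j:ℝ),
          K (x - y) * g y ≤ ENNReal.ofReal (c * rexp (-((j:ℝ)^2) / (4*t))) * g y := by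
        intro y hy
        refine mul_le_mul_left (ENNReal.ofReal_le_ofReal ?_) _
        refine mul_le_mul_of_nonneg_left ?_ hc.le
        apply Real.exp_le_exp.2
        have hdist : (j:ℝ) ≤ ‖x - y‖ := by
          have h2 := hy.2
          rw [mem_ball, not_lt] at h2
          rw [← dist_eq_norm, dist_comm]
          exact h2
        have hsq : ((j:ℝ))^2 ≤ ‖x - y‖^2 := pow_le_pow_left₀ (by positivity) hdist 2
        have h4 : (0:ℝ) < 4*t := by positivity
        exact div_le_div_of_nonneg_right (neg_le_neg hsq) h4.le
      have hexp : rexp (-((j:ℝ)^2)/(4*t)) ≤ ρ ^ j := by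
        rw [hρ_def, ← Real.exp_nat_mul]
        apply Real.exp_le_exp.2
        have hj : (j:ℝ) ≤ (j:ℝ)^2 := by
          exact_mod_cast Nat.le_self_pow two_ne_zero j
        have h4 : (0:ℝ) < 4*t := by positivity
        rw [show (j:ℝ) * -(1/(4*t)) = -(j:ℝ)/(4*t) by ring]
        exact div_le_div_of_nonneg_right (neg_le_neg hj) h4.le
      calc ∫⁻ y in ball x ((j:ℝ)+1) \ ball x (j:ℝ), K (x - y) * g y
          ≤ ∫⁻ y in ball x ((j:ℝ)+1) \ ball x (j:ℝ),
              ENNReal.ofReal (c * rexp (-((j:ℝ)^2)/(4*t))) * g y :=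
            setLIntegral_mono (measurable_const.mul hgmeas) hKb
        _ = ENNReal.ofReal (c * rexp (-((j:ℝ)^2)/(4*t))) *
              ∫⁻ y in ball x ((j:ℝ)+1) \ ball x (j:ℝ), g y := lintegral_const_mul _ hgmeas
        _ ≤ ENNReal.ofReal (c * rexp (-((j:ℝ)^2)/(4*t))) * ∫⁻ y in ball x ((j:ℝ)+1), g y :=
            mul_le_mul_right (lintegral_mono_set Set.diff_subset) _
        _ ≤ ENNReal.ofReal (c * rexp (-((j:ℝ)^2)/(4*t))) *
              (ENNReal.ofReal (((j:ℝ)+1) ^ ((n:ℝ)-2)) * M ^ 2) :=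
            mul_le_mul_right (hb2 _ (by positivity) x) _
        _ ≤ ENNReal.ofReal (c * (((j:ℝ)+1)^k * ρ^j)) * M ^ 2 := by
            rw [← mul_assoc, ← ENNReal.ofReal_mul (by positivity)]
            refine mul_le_mul_left (ENNReal.ofReal_le_ofReal ?_) _
            rw [← hkc, Real.rpow_natCast]
            calc c * rexp (-((j:ℝ)^2)/(4*t)) * ((j:ℝ)+1)^k
                ≤ c * ρ^j * ((j:ℝ)+1)^k := by
                  have h0 : (0:ℝ) ≤ ((j:ℝ)+1)^k := by positivity
                  nlinarith [mul_le_mul_of_nonneg_left hexp hc.le]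
              _ = c * (((j:ℝ)+1)^k * ρ^j) := by ring
    have hcover : (∫⁻ y, K (x - y) * g y)
        ≤ ∑' j : ℕ, ∫⁻ y in ball x ((j:ℝ)+1) \ ball x (j:ℝ), K (x - y) * g y := by
      have hsub : (Set.univ : Set (EuclideanSpace ℝ (Fin n))) ⊆
          ⋃ j : ℕ, (ball x ((j:ℝ)+1) \ ball x (j:ℝ)) := by
        intro y _
        refine Set.mem_iUnion.2 ⟨⌊dist y x⌋₊, ?_, ?_⟩
        · exact mem_ball.2 (Nat.lt_floor_add_one (dist y x))
        · intro hmem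
          exact absurd (mem_ball.1 hmem) (not_lt.2 (Nat.floor_le dist_nonneg))
      calc ∫⁻ y, K (x - y) * g y
          = ∫⁻ y in Set.univ, K (x - y) * g y := (setLIntegral_univ _).symm
        _ ≤ ∫⁻ y in ⋃ j : ℕ, (ball x ((j:ℝ)+1) \ ball x (j:ℝ)), K (x - y) * g y :=
            lintegral_mono_set hsub
        _ ≤ _ := lintegral_iUnion_le _ _
    have htotal : (∫⁻ y, K (x - y) * g y)
        ≤ (∑' j : ℕ, ENNReal.ofReal (c * (((j:ℝ)+1)^k * ρ^j))) * M ^ 2 := by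
      refine hcover.trans ?_
      rw [← ENNReal.tsum_mul_right]
      exact ENNReal.tsum_le_tsum hterm
    have hS : (∑' j : ℕ, ENNReal.ofReal (c * (((j:ℝ)+1)^k * ρ^j))) ≠ ⊤ := by
      rw [← ENNReal.ofReal_tsum_of_nonneg (fun j => by positivity) hsumb]
      exact ENNReal.ofReal_ne_top
    exact ne_top_of_le_ne_top (ENNReal.mul_ne_top hS (ENNReal.pow_ne_top hM)) htotal
  -- Cauchy–Schwarz
  have hCS : ∀ x, (∫⁻ y, K (x - y) * (‖f y‖₊ : ℝ≥0∞))
      ≤ (∫⁻ y, K (x - y) * g y) ^ (1/2 : ℝ) := by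
    intro x
    set L : EuclideanSpace ℝ (Fin n) → ℝ≥0∞ :=
      fun z => ENNReal.ofReal (Real.sqrt (c * rexp (-‖z‖ ^ 2 / (4 * t)))) with hL_def
    have hLmeas : Measurable L :=
      (Real.continuous_sqrt.measurable.comp
        (measurable_const.mul (HeatAux.expArg_meas t))).ennreal_ofReal
    have hLL : ∀ z, L z * L z = K z := by
      intro z
      rw [hL_def, hK_def]
      simp only
      rw [← ENNReal.ofReal_mul (Real.sqrt_nonneg _), Real.mul_self_sqrt (by positivity)]
    have hxm : Measurable fun y : EuclideanSpace ℝ (Fin n) => L (x - y) :=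
      hLmeas.comp (measurable_const.sub measurable_id)
    have hconj : (2:ℝ).HolderConjugate 2 := Real.HolderConjugate.two_two
    have h := ENNReal.lintegral_mul_le_Lp_mul_Lq volume hconj hxm.aemeasurable
      (hxm.mul hf.nnnorm.coe_nnreal_ennreal).aemeasurable
    have hKx : (∫⁻ y, K (x - y)) = 1 := by
      have h2 := (Measure.measurePreserving_sub_left volume x).lintegral_comp hKmeas
      rw [hK1] at h2
      exact h2
    have e1 : (∫⁻ y, L (x - y) ^ (2:ℝ)) = 1 := by
      rw [show ∫⁻ y, L (x - y) ^ (2:ℝ) = ∫⁻ y, K (x - y) from by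
        congr 1; funext y
        rw [show (2:ℝ) = ((2:ℕ):ℝ) by norm_num, ENNReal.rpow_natCast, pow_two, hLL]]
      exact hKx
    have e2 : (∫⁻ y, (L (x - y) * (‖f y‖₊ : ℝ≥0∞)) ^ (2:ℝ)) = ∫⁻ y, K (x - y) * g y := by
      congr 1; funext y
      rw [show (2:ℝ) = ((2:ℕ):ℝ) by norm_num, ENNReal.rpow_natCast, pow_two,
        mul_mul_mul_comm, hLL, hg_def]
      simp only
      rw [pow_two]
    calc (∫⁻ y, K (x - y) * (‖f y‖₊ : ℝ≥0∞))
        = ∫⁻ y, L (x - y) * (L (x - y) * (‖f y‖₊ : ℝ≥0∞)) := by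
          congr 1; funext y; rw [← mul_assoc, hLL]
      _ ≤ (∫⁻ y, L (x - y) ^ (2:ℝ)) ^ (1/2:ℝ) *
            (∫⁻ y, (L (x - y) * (‖f y‖₊ : ℝ≥0∞)) ^ (2:ℝ)) ^ (1/2:ℝ) := by simpa using h
      _ = (∫⁻ y, K (x - y) * g y) ^ (1/2:ℝ) := by
          rw [e1, e2, ENNReal.one_rpow, one_mul]
  -- pointwise bound for the heat extension
  have hnn : ∀ x, (fun y => (‖(c * rexp (-‖x - y‖ ^ 2 / (4 * t))) • f y‖₊ : ℝ≥0∞))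
      = fun y => K (x - y) * (‖f y‖₊ : ℝ≥0∞) := by
    intro x
    funext y
    rw [nnnorm_smul, ENNReal.coe_mul, hK_def]
    simp only
    congr 1
    exact Real.enorm_eq_ofReal (by positivity : (0:ℝ) ≤ c * rexp (-‖x - y‖ ^ 2 / (4 * t)))
  have hpt : ∀ x, (‖heatExt n f t x‖₊ : ℝ≥0∞) ^ 2 ≤ ∫⁻ y, K (x - y) * g y := by
    intro x
    have h1 : (‖heatExt n f t x‖₊ : ℝ≥0∞) ≤ ∫⁻ y, K (x - y) * (‖f y‖₊ : ℝ≥0∞) := by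
      refine le_trans ?_ (le_of_eq (congrArg (fun F => ∫⁻ y, F y) (hnn x)))
      simp only [heatExt]
      exact enorm_integral_le_lintegral_enorm _
    have h2 := h1.trans (hCS x)
    calc (‖heatExt n f t x‖₊ : ℝ≥0∞) ^ 2
        ≤ ((∫⁻ y, K (x - y) * g y) ^ (1/2:ℝ)) ^ 2 := pow_le_pow_left' h2 2
      _ = ∫⁻ y, K (x - y) * g y := by
          rw [← ENNReal.rpow_natCast _ 2, ← ENNReal.rpow_mul]
          norm_num
  -- integrability
  have hIx : ∀ x : EuclideanSpace ℝ (Fin n),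
      Integrable (fun y => (c * rexp (-‖x - y‖ ^ 2 / (4 * t))) • f y) := by
    intro x
    refine ⟨((measurable_const.mul
      ((HeatAux.expArg_meas t).comp (measurable_const.sub measurable_id))).smul
        hf).aestronglyMeasurable, ?_⟩
    show (∫⁻ y, (‖(c * rexp (-‖x - y‖ ^ 2 / (4 * t))) • f y‖₊ : ℝ≥0∞)) < ⊤
    rw [congrArg (fun F => ∫⁻ y, F y) (hnn x)]
    exact lt_of_le_of_lt (hCS x)
      (ENNReal.rpow_lt_top_of_nonneg (by norm_num) (hfin x))
  -- main Morrey estimate for the heat extension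
  have hmain : ∀ r, 0 < r → ∀ x₀, (∫⁻ z in ball x₀ r, (‖heatExt n f t z‖₊ : ℝ≥0∞) ^ 2)
      ≤ ENNReal.ofReal (r ^ ((n:ℝ) - 2)) * M ^ 2 := by
    intro r hr x₀
    have hFmeas : Measurable
        (Function.uncurry fun z w : EuclideanSpace ℝ (Fin n) => K w * g (z - w)) :=
      (hKmeas.comp measurable_snd).mul (hgmeas.comp (measurable_fst.sub measurable_snd))
    have hinner : ∀ z, (∫⁻ y, K (z - y) * g y) = ∫⁻ w, K w * g (z - w) := by
      intro z
      have hFz : Measurable fun y : EuclideanSpace ℝ (Fin n) => K (z - y) * g y :=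
        (hKmeas.comp (measurable_const.sub measurable_id)).mul hgmeas
      have h := (Measure.measurePreserving_sub_left volume z).lintegral_comp hFz
      rw [← h]
      congr 1; funext w; rw [sub_sub_cancel]
    have htrans : ∀ w, (∫⁻ z in ball x₀ r, g (z - w)) = ∫⁻ u in ball (x₀ - w) r, g u := by
      intro w
      have hgm' : Measurable fun z : EuclideanSpace ℝ (Fin n) => g (z - w) :=
        hgmeas.comp (measurable_id.sub measurable_const)
      have hmem : ∀ u : EuclideanSpace ℝ (Fin n),
          (u + w ∈ ball x₀ r) ↔ (u ∈ ball (x₀ - w) r) := by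
        intro u
        rw [mem_ball, mem_ball, show x₀ = (x₀ - w) + w by abel, dist_add_right]
        simp [sub_add_cancel]
      calc ∫⁻ z in ball x₀ r, g (z - w)
          = ∫⁻ z, (ball x₀ r).indicator (fun z => g (z - w)) z :=
            (lintegral_indicator measurableSet_ball _).symm
        _ = ∫⁻ u, (ball (x₀ - w) r).indicator g u := by
            rw [← (measurePreserving_add_right volume w).lintegral_comp
              (hgm'.indicator measurableSet_ball)]
            congr 1; funext u
            by_cases hu : u ∈ ball (x₀ - w) r
            · rw [Set.indicator_of_mem ((hmem u).2 hu), Set.indicator_of_mem hu,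
                add_sub_cancel_right]
            · rw [Set.indicator_of_notMem (fun hh => hu ((hmem u).1 hh)),
                Set.indicator_of_notMem hu]
        _ = ∫⁻ u in ball (x₀ - w) r, g u := lintegral_indicator measurableSet_ball _
    calc (∫⁻ z in ball x₀ r, (‖heatExt n f t z‖₊ : ℝ≥0∞) ^ 2)
        ≤ ∫⁻ z in ball x₀ r, ∫⁻ w, K w * g (z - w) := by
          refine setLIntegral_mono (Measurable.lintegral_prod_right hFmeas) fun z _ => ?_
          exact (hpt z).trans_eq (hinner z)
      _ = ∫⁻ w, ∫⁻ z in ball x₀ r, K w * g (z - w) :=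
          lintegral_lintegral_swap hFmeas.aemeasurable
      _ ≤ ∫⁻ w, K w * (ENNReal.ofReal (r ^ ((n:ℝ) - 2)) * M ^ 2) := by
          refine lintegral_mono fun w => ?_
          have hgm' : Measurable fun z : EuclideanSpace ℝ (Fin n) => g (z - w) :=
            hgmeas.comp (measurable_id.sub measurable_const)
          rw [lintegral_const_mul _ hgm', htrans w]
          exact mul_le_mul_right (hb2 r hr (x₀ - w)) _
      _ = (∫⁻ w, K w) * (ENNReal.ofReal (r ^ ((n:ℝ) - 2)) * M ^ 2) :=
          lintegral_mul_const _ hKmeas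
      _ = ENNReal.ofReal (r ^ ((n:ℝ) - 2)) * M ^ 2 := by rw [hK1, one_mul]
  -- conclusion
  refine ⟨Filter.Eventually.of_forall fun x => hIx x, ?_⟩
  rw [ENNReal.ofReal_one, one_mul]
  rw [MorreyNorm]
  refine iSup_le fun r => iSup_le fun hr => iSup_le fun x => ?_
  have hle : ENNReal.ofReal (r ^ ((2:ℝ) - (n:ℝ))) *
      (∫⁻ z in ball x r, (‖heatExt n f t z‖₊ : ℝ≥0∞) ^ 2) ≤ M ^ 2 := by
    calc ENNReal.ofReal (r ^ ((2:ℝ) - (n:ℝ))) *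
        (∫⁻ z in ball x r, (‖heatExt n f t z‖₊ : ℝ≥0∞) ^ 2)
        ≤ ENNReal.ofReal (r ^ ((2:ℝ) - (n:ℝ))) *
            (ENNReal.ofReal (r ^ ((n:ℝ) - 2)) * M ^ 2) := mul_le_mul_right (hmain r hr x) _
      _ = M ^ 2 := by
          rw [← mul_assoc, ← ENNReal.ofReal_mul (by positivity), ← Real.rpow_add hr,
            show ((2:ℝ) - (n:ℝ)) + ((n:ℝ) - 2) = 0 by ring, Real.rpow_zero,
            ENNReal.ofReal_one, one_mul]
  calc (ENNReal.ofReal (r ^ ((2:ℝ) - (n:ℝ))) *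
        ∫⁻ z in ball x r, (‖heatExt n f t z‖₊ : ℝ≥0∞) ^ 2) ^ (1/2:ℝ)
      ≤ (M ^ 2) ^ (1/2:ℝ) := ENNReal.rpow_le_rpow hle (by norm_num)
    _ = M := by
        rw [← ENNReal.rpow_natCast M 2, ← ENNReal.rpow_mul]
        norm_num
end
end

section
/- Let n ≥ 2. There is a constant C = C(n) > 0 such that for every f ∈ L²_{loc}(ℝⁿ) with ‖f‖_{L_{2,n−2}} < ∞ and every t > 0, the heat extension e^{tΔ}f(x) is defined for every x and satisfies sup_{x∈ℝⁿ} |e^{tΔ}f(x)| ≤ C t^{−1/2} ‖f‖_{L_{2,n−2}}. -/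
open MeasureTheory Metric Real
open scoped ENNReal NNReal

noncomputable section

/-- Morrey norm controls the squared L² integral on balls. -/
lemma morrey_ball_sq (n : ℕ) (f : EuclideanSpace ℝ (Fin n) → ℂ)
    {r : ℝ} (hr : 0 < r) (x : EuclideanSpace ℝ (Fin n)) :
    (∫⁻ y in Metric.ball x r, (‖f y‖₊ : ℝ≥0∞) ^ 2) ≤
      ENNReal.ofReal (r ^ ((n : ℝ) - 2)) * (MorreyNorm n f) ^ 2 := by
  set I := ∫⁻ y in Metric.ball x r, (‖f y‖₊ : ℝ≥0∞) ^ 2 with hI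
  have h1 : (ENNReal.ofReal (r ^ ((2 : ℝ) - (n : ℝ))) * I) ^ (1 / 2 : ℝ) ≤ MorreyNorm n f := by
    rw [hI]
    refine le_trans (le_iSup (fun x' => (ENNReal.ofReal (r ^ ((2 : ℝ) - (n : ℝ))) *
      ∫⁻ y in Metric.ball x' r, (‖f y‖₊ : ℝ≥0∞) ^ 2) ^ (1 / 2 : ℝ)) x) ?_
    refine le_trans (le_iSup (fun _ : 0 < r => ⨆ (x' : EuclideanSpace ℝ (Fin n)),
      (ENNReal.ofReal (r ^ ((2 : ℝ) - (n : ℝ))) *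
        ∫⁻ y in Metric.ball x' r, (‖f y‖₊ : ℝ≥0∞) ^ 2) ^ (1 / 2 : ℝ)) hr) ?_
    exact le_iSup (fun r' => ⨆ (_ : 0 < r') (x' : EuclideanSpace ℝ (Fin n)),
      (ENNReal.ofReal (r' ^ ((2 : ℝ) - (n : ℝ))) *
        ∫⁻ y in Metric.ball x' r', (‖f y‖₊ : ℝ≥0∞) ^ 2) ^ (1 / 2 : ℝ)) r
  have h2 := ENNReal.rpow_le_rpow h1 (by norm_num : (0:ℝ) ≤ 2)
  rw [← ENNReal.rpow_mul] at h2
  norm_num at h2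
  have hmul : ENNReal.ofReal (r ^ ((n : ℝ) - 2)) * ENNReal.ofReal (r ^ ((2 : ℝ) - (n : ℝ)))
      = 1 := by
    rw [← ENNReal.ofReal_mul (Real.rpow_nonneg hr.le _), ← Real.rpow_add hr]
    norm_num
  calc I = ENNReal.ofReal (r ^ ((n : ℝ) - 2)) * (ENNReal.ofReal (r ^ ((2 : ℝ) - (n : ℝ))) * I) := by
        rw [← mul_assoc, hmul, one_mul]
    _ ≤ ENNReal.ofReal (r ^ ((n : ℝ) - 2)) * (MorreyNorm n f) ^ 2 :=
        mul_le_mul_right h2 _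

/-- Cauchy–Schwarz: Morrey norm controls the L¹ integral on balls. -/
lemma morrey_ball_l1 (n : ℕ) (f : EuclideanSpace ℝ (Fin n) → ℂ) (hf : Measurable f)
    {r : ℝ} (hr : 0 < r) (x : EuclideanSpace ℝ (Fin n)) :
    (∫⁻ y in Metric.ball x r, (‖f y‖₊ : ℝ≥0∞)) ≤
      (volume (Metric.ball (0 : EuclideanSpace ℝ (Fin n)) 1)) ^ (1/2 : ℝ) *
        ENNReal.ofReal (r ^ ((n : ℝ) - 1)) * MorreyNorm n f := by
  have hconj : (2 : ℝ).HolderConjugate 2 := Real.HolderConjugate.two_two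
  have hmeas : AEMeasurable (fun y => (‖f y‖₊ : ℝ≥0∞))
      (volume.restrict (Metric.ball x r)) := (hf.enorm).aemeasurable
  have CS := ENNReal.lintegral_mul_le_Lp_mul_Lq (volume.restrict (Metric.ball x r)) hconj
    hmeas (aemeasurable_const (b := (1 : ℝ≥0∞)))
  simp only [Pi.mul_apply, mul_one, ENNReal.one_rpow, lintegral_const,
    Measure.restrict_apply MeasurableSet.univ, Set.univ_inter, one_mul] at CS
  have hsq : ∫⁻ y in Metric.ball x r, (‖f y‖₊ : ℝ≥0∞) ^ (2:ℝ)
      = ∫⁻ y in Metric.ball x r, (‖f y‖₊ : ℝ≥0∞) ^ 2 := by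
    congr 1; funext y; rw [← ENNReal.rpow_natCast]; norm_num
  rw [hsq] at CS
  have hvol : volume (Metric.ball x r)
      = ENNReal.ofReal (r ^ ((n:ℝ))) * volume (Metric.ball (0 : EuclideanSpace ℝ (Fin n)) 1) := by
    rw [Measure.addHaar_ball_of_pos _ x hr, finrank_euclideanSpace_fin, ← Real.rpow_natCast r n]
  refine CS.trans ?_
  have hM := morrey_ball_sq n f hr x
  have h1 : (∫⁻ y in Metric.ball x r, (‖f y‖₊ : ℝ≥0∞) ^ 2) ^ (1/2 : ℝ)
      ≤ ENNReal.ofReal (r ^ (((n:ℝ) - 2)/2)) * MorreyNorm n f := by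
    calc (∫⁻ y in Metric.ball x r, (‖f y‖₊ : ℝ≥0∞) ^ 2) ^ (1/2 : ℝ)
        ≤ (ENNReal.ofReal (r ^ ((n : ℝ) - 2)) * (MorreyNorm n f) ^ 2) ^ (1/2 : ℝ) :=
          ENNReal.rpow_le_rpow hM (by norm_num)
      _ = ENNReal.ofReal (r ^ (((n:ℝ) - 2)/2)) * MorreyNorm n f := by
          have hsqr : ((MorreyNorm n f) ^ 2) ^ (1/2 : ℝ) = MorreyNorm n f := by
            rw [← ENNReal.rpow_natCast (MorreyNorm n f) 2, ← ENNReal.rpow_mul]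
            norm_num
          rw [ENNReal.mul_rpow_of_nonneg _ _ (by norm_num : (0:ℝ) ≤ 1/2), hsqr,
            ENNReal.ofReal_rpow_of_pos (Real.rpow_pos_of_pos hr _),
            ← Real.rpow_mul hr.le]
          norm_num [mul_one_div]
  have h2 : (volume (Metric.ball x r)) ^ (1/2:ℝ)
      = ENNReal.ofReal (r ^ ((n:ℝ)/2)) *
        (volume (Metric.ball (0 : EuclideanSpace ℝ (Fin n)) 1)) ^ (1/2:ℝ) := by
    rw [hvol, ENNReal.mul_rpow_of_nonneg _ _ (by norm_num : (0:ℝ) ≤ 1/2),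
      ENNReal.ofReal_rpow_of_pos (Real.rpow_pos_of_pos hr _), ← Real.rpow_mul hr.le]
    norm_num [mul_one_div]
  calc (∫⁻ y in Metric.ball x r, (‖f y‖₊ : ℝ≥0∞) ^ 2) ^ (1/2 : ℝ)
        * (volume (Metric.ball x r)) ^ (1/2:ℝ)
      ≤ (ENNReal.ofReal (r ^ (((n:ℝ) - 2)/2)) * MorreyNorm n f) *
        (ENNReal.ofReal (r ^ ((n:ℝ)/2)) *
          (volume (Metric.ball (0 : EuclideanSpace ℝ (Fin n)) 1)) ^ (1/2:ℝ)) := by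
        rw [h2]; exact mul_le_mul_left h1 _
    _ = (volume (Metric.ball (0 : EuclideanSpace ℝ (Fin n)) 1)) ^ (1/2 : ℝ) *
        (ENNReal.ofReal (r ^ (((n:ℝ) - 2)/2)) * ENNReal.ofReal (r ^ ((n:ℝ)/2))) *
        MorreyNorm n f := by ring
    _ = (volume (Metric.ball (0 : EuclideanSpace ℝ (Fin n)) 1)) ^ (1/2 : ℝ) *
        ENNReal.ofReal (r ^ ((n : ℝ) - 1)) * MorreyNorm n f := by
        rw [← ENNReal.ofReal_mul (Real.rpow_nonneg hr.le _), ← Real.rpow_add hr]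
        ring_nf

/-- Pointwise bound of the Gaussian kernel by indicators of dyadic balls. -/
lemma kernel_pointwise (n : ℕ) {t : ℝ} (ht : 0 < t) (x y : EuclideanSpace ℝ (Fin n)) :
    ENNReal.ofReal (Real.exp (-‖x - y‖ ^ 2 / (4 * t))) ≤
      (Metric.ball x (Real.sqrt t)).indicator (fun _ => (1:ℝ≥0∞)) y +
        ∑' k : ℕ, ENNReal.ofReal (Real.exp (-((4:ℝ) ^ k) / 4)) *
          (Metric.ball x ((2:ℝ) ^ (k+1) * Real.sqrt t)).indicator (fun _ => (1:ℝ≥0∞)) y := by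
  have hst : 0 < Real.sqrt t := Real.sqrt_pos.mpr ht
  by_cases hy : y ∈ Metric.ball x (Real.sqrt t)
  · have h1 : (Metric.ball x (Real.sqrt t)).indicator (fun _ => (1:ℝ≥0∞)) y = 1 :=
      Set.indicator_of_mem hy _
    have h2 : ENNReal.ofReal (Real.exp (-‖x - y‖ ^ 2 / (4 * t))) ≤ 1 := by
      rw [show (1:ℝ≥0∞) = ENNReal.ofReal 1 by simp]
      refine ENNReal.ofReal_le_ofReal ?_
      rw [← Real.exp_zero]
      apply Real.exp_le_exp.mpr
      apply div_nonpos_of_nonpos_of_nonneg (neg_nonpos.mpr (by positivity)) (by positivity)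
    calc ENNReal.ofReal (Real.exp (-‖x - y‖ ^ 2 / (4 * t))) ≤ 1 := h2
      _ = (Metric.ball x (Real.sqrt t)).indicator (fun _ => (1:ℝ≥0∞)) y := h1.symm
      _ ≤ _ := le_add_right le_rfl
  · have hd : Real.sqrt t ≤ ‖x - y‖ := by
      have := Metric.mem_ball.not.mp hy
      push_neg at this
      rwa [dist_eq_norm, norm_sub_rev] at this
    have hex : ∃ k : ℕ, ‖x - y‖ < (2:ℝ) ^ (k+1) * Real.sqrt t := by
      obtain ⟨k, hk⟩ := pow_unbounded_of_one_lt (‖x - y‖ / Real.sqrt t) (one_lt_two (α := ℝ))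
      refine ⟨k, ?_⟩
      rw [div_lt_iff₀ hst] at hk
      exact hk.trans_le (mul_le_mul_of_nonneg_right
        (pow_le_pow_right₀ one_le_two (Nat.le_succ k)) hst.le)
    set k := Nat.find hex with hkdef
    have hk : ‖x - y‖ < (2:ℝ) ^ (k+1) * Real.sqrt t := Nat.find_spec hex
    have hlow : (2:ℝ) ^ k * Real.sqrt t ≤ ‖x - y‖ := by
      rcases Nat.eq_zero_or_pos k with h0 | hpos
      · rw [h0]; simpa using hd
      · have hmin := Nat.find_min hex (Nat.pred_lt hpos.ne')
        push_neg at hmin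
        have hpe : (Nat.find hex).pred + 1 = Nat.find hex := Nat.succ_pred_eq_of_pos hpos
        rwa [hpe] at hmin
    have hsq : (4:ℝ) ^ k * t ≤ ‖x - y‖ ^ 2 := by
      have h4 : (4:ℝ) ^ k = ((2:ℝ) ^ k) ^ 2 := by
        rw [← pow_mul, mul_comm, pow_mul]; norm_num
      have := pow_le_pow_left₀ (by positivity) hlow 2
      rwa [mul_pow, Real.sq_sqrt ht.le, ← h4] at this
    have hexp : Real.exp (-‖x - y‖ ^ 2 / (4 * t)) ≤ Real.exp (-((4:ℝ) ^ k) / 4) := by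
      apply Real.exp_le_exp.mpr
      rw [div_le_div_iff₀ (by positivity) (by norm_num)]
      nlinarith [hsq, ht]
    have hmem : y ∈ Metric.ball x ((2:ℝ) ^ (k+1) * Real.sqrt t) := by
      rw [Metric.mem_ball, dist_eq_norm, norm_sub_rev]; exact hk
    have hterm : ENNReal.ofReal (Real.exp (-‖x - y‖ ^ 2 / (4 * t))) ≤
        ENNReal.ofReal (Real.exp (-((4:ℝ) ^ k) / 4)) *
          (Metric.ball x ((2:ℝ) ^ (k+1) * Real.sqrt t)).indicator (fun _ => (1:ℝ≥0∞)) y := by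
      rw [Set.indicator_of_mem hmem, mul_one]
      exact ENNReal.ofReal_le_ofReal hexp
    refine hterm.trans (le_trans (ENNReal.le_tsum (f := fun j => ENNReal.ofReal
      (Real.exp (-((4:ℝ) ^ j) / 4)) * (Metric.ball x ((2:ℝ) ^ (j+1) *
        Real.sqrt t)).indicator (fun _ => (1:ℝ≥0∞)) y) k) ?_)
    exact le_add_left le_rfl

/-- The dyadic series terms decay geometrically. -/
lemma series_term_bound (n : ℕ) (hn : 2 ≤ n) (k : ℕ) :
    Real.exp (-((4:ℝ) ^ k) / 4) * ((2:ℝ) ^ (k+1)) ^ ((n:ℝ) - 1) ≤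
      ((2:ℝ) ^ (n+1) * (4 * n) ^ n) * (2⁻¹ : ℝ) ^ k := by
  have hb : (1:ℝ) ≤ (2:ℝ) ^ (k+1) := one_le_pow₀ one_le_two
  have h1 : ((2:ℝ) ^ (k+1)) ^ ((n:ℝ) - 1) ≤ ((2:ℝ) ^ (k+1)) ^ (n:ℝ) :=
    Real.rpow_le_rpow_of_exponent_le hb (by linarith)
  have h2 : ((2:ℝ) ^ (k+1)) ^ (n:ℝ) = (2:ℝ) ^ ((k+1)*n) := by
    rw [Real.rpow_natCast, ← pow_mul]
  -- key exponential lower bound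
  have hnpos : (0:ℝ) < n := by exact_mod_cast (by omega : 0 < n)
  have hu : (0:ℝ) ≤ (4:ℝ) ^ k / (4 * n) := by positivity
  have hexp : (4:ℝ) ^ (k*n) / (4*n) ^ n ≤ Real.exp ((4:ℝ) ^ k / 4) := by
    have ha : (4:ℝ) ^ k / (4 * n) ≤ Real.exp ((4:ℝ) ^ k / (4 * n)) := by
      have := Real.add_one_le_exp ((4:ℝ) ^ k / (4 * n)); linarith
    have hb2 := pow_le_pow_left₀ hu ha n
    have hc : (n:ℝ) * ((4:ℝ) ^ k / (4 * n)) = (4:ℝ) ^ k / 4 := by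
      field_simp
    rw [← Real.exp_nat_mul, hc] at hb2
    calc (4:ℝ) ^ (k*n) / (4*n) ^ n = ((4:ℝ) ^ k / (4 * n)) ^ n := by
          rw [div_pow, pow_mul]
      _ ≤ Real.exp ((4:ℝ) ^ k / 4) := hb2
  have hkey : (2:ℝ) ^ ((k+1)*n + k) ≤ (2:ℝ) ^ (n+1) * (4 * n) ^ n * Real.exp ((4:ℝ) ^ k / 4) := by
    have hle : (k+1)*n + k ≤ (n+1) + 2*(k*n) := by nlinarith [Nat.one_le_iff_ne_zero.mpr (show n ≠ 0 by omega), k.zero_le]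
    calc (2:ℝ) ^ ((k+1)*n + k) ≤ (2:ℝ) ^ ((n+1) + 2*(k*n)) :=
          pow_le_pow_right₀ one_le_two hle
      _ = (2:ℝ) ^ (n+1) * (4:ℝ) ^ (k*n) := by
          rw [pow_add]; congr 1
          rw [show (4:ℝ) = 2^2 by norm_num, ← pow_mul]
      _ ≤ (2:ℝ) ^ (n+1) * ((4 * n) ^ n * Real.exp ((4:ℝ) ^ k / 4)) := by
          refine mul_le_mul_of_nonneg_left ?_ (by positivity)
          rw [← div_le_iff₀' (by positivity)] ; exact hexp
      _ = (2:ℝ) ^ (n+1) * (4 * n) ^ n * Real.exp ((4:ℝ) ^ k / 4) := by ring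
  calc Real.exp (-((4:ℝ) ^ k) / 4) * ((2:ℝ) ^ (k+1)) ^ ((n:ℝ) - 1)
      ≤ Real.exp (-((4:ℝ) ^ k) / 4) * (2:ℝ) ^ ((k+1)*n) := by
        refine mul_le_mul_of_nonneg_left (h1.trans_eq h2) (Real.exp_nonneg _)
    _ ≤ ((2:ℝ) ^ (n+1) * (4 * n) ^ n) * (2⁻¹ : ℝ) ^ k := by
        rw [neg_div, Real.exp_neg, inv_pow, mul_comm (Real.exp ((4:ℝ) ^ k / 4))⁻¹,
          ← div_eq_mul_inv, ← div_eq_mul_inv,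
          div_le_div_iff₀ (Real.exp_pos _) (by positivity)]
        calc (2:ℝ) ^ ((k+1)*n) * (2:ℝ) ^ k = (2:ℝ) ^ ((k+1)*n + k) := (pow_add _ _ _).symm
          _ ≤ (2:ℝ) ^ (n+1) * (4 * n) ^ n * Real.exp ((4:ℝ) ^ k / 4) := hkey

lemma geo_half_sum : ∑' k : ℕ, ENNReal.ofReal ((2⁻¹:ℝ) ^ k) = 2 := by
  have h : ∀ k : ℕ, ENNReal.ofReal ((2⁻¹:ℝ) ^ k) = (2⁻¹ : ℝ≥0∞) ^ k := by
    intro k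
    rw [ENNReal.ofReal_pow (by norm_num)]
    congr 1
    rw [ENNReal.ofReal_inv_of_pos two_pos, ENNReal.ofReal_ofNat]
  rw [tsum_congr h, ENNReal.tsum_geometric, ENNReal.one_sub_inv_two, inv_inv]

/-- For `f` with finite square Morrey norm and `t > 0`, the heat extension is
defined everywhere and `sup_x |e^{tΔ}f(x)| ≤ C t^{−1/2} ‖f‖_{L_{2,n−2}}`. -/
theorem heat_ext_sup_bound (n : ℕ) (hn : 2 ≤ n) :
    ∃ C > (0 : ℝ), ∀ f : EuclideanSpace ℝ (Fin n) → ℂ,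
      Measurable f → LocallyIntegrable (fun y => ‖f y‖ ^ 2) volume →
      MorreyNorm n f ≠ ⊤ → ∀ t > (0 : ℝ), ∀ x : EuclideanSpace ℝ (Fin n),
        Integrable (fun y =>
          ((4 * π * t) ^ (-(n : ℝ) / 2) * Real.exp (-‖x - y‖ ^ 2 / (4 * t))) • f y) ∧
        (‖heatExt n f t x‖₊ : ℝ≥0∞) ≤
          ENNReal.ofReal (C * t ^ (-(1 : ℝ) / 2)) * MorreyNorm n f := by
  set V₀ : ℝ≥0∞ := volume (Metric.ball (0 : EuclideanSpace ℝ (Fin n)) 1) with hV₀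
  have hV₀pos : 0 < V₀ := measure_ball_pos _ _ one_pos
  have hV₀top : V₀ ≠ ⊤ := measure_ball_lt_top.ne
  set V : ℝ≥0∞ := V₀ ^ (1/2:ℝ) with hV
  have hVtop : V ≠ ⊤ := ENNReal.rpow_ne_top_of_nonneg (by norm_num) hV₀top
  have hVpos : 0 < V := ENNReal.rpow_pos hV₀pos hV₀top
  set Vr : ℝ := V.toReal with hVr
  have hVrpos : 0 < Vr := ENNReal.toReal_pos hVpos.ne' hVtop
  have hVeq : V = ENNReal.ofReal Vr := (ENNReal.ofReal_toReal hVtop).symm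
  set D : ℝ := (2:ℝ)^(n+1) * (4*(n:ℝ))^n with hD
  have hDpos : 0 < D := by positivity
  set S : ℝ := 1 + 2*D with hS
  have hSpos : 0 < S := by positivity
  have hπ : (0:ℝ) < 4*π := by positivity
  refine ⟨Vr * ((4*π) ^ (-(n:ℝ)/2) * S), by positivity, ?_⟩
  intro f hfm hloc hM t ht x
  have hs : 0 < Real.sqrt t := Real.sqrt_pos.mpr ht
  have hker_cont : Continuous fun y : EuclideanSpace ℝ (Fin n) =>
      Real.exp (-‖x - y‖ ^ 2 / (4 * t)) := by fun_prop
  have hker : Measurable fun y : EuclideanSpace ℝ (Fin n) =>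
      ENNReal.ofReal (Real.exp (-‖x - y‖ ^ 2 / (4 * t))) :=
    hker_cont.measurable.ennreal_ofReal
  have hh : Measurable fun y : EuclideanSpace ℝ (Fin n) => (‖f y‖₊ : ℝ≥0∞) := hfm.enorm
  set J := ∫⁻ y, ENNReal.ofReal (Real.exp (-‖x - y‖ ^ 2 / (4 * t))) * ‖f y‖₊ with hJdef
  have hg_norm : ∀ y, (‖((4 * π * t) ^ (-(n : ℝ) / 2) *
        Real.exp (-‖x - y‖ ^ 2 / (4 * t))) • f y‖₊ : ℝ≥0∞)
      = ENNReal.ofReal ((4*π*t) ^ (-(n:ℝ)/2)) *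
          (ENNReal.ofReal (Real.exp (-‖x - y‖ ^ 2 / (4 * t))) * (‖f y‖₊ : ℝ≥0∞)) := by
    intro y
    rw [nnnorm_smul, ENNReal.coe_mul, nnnorm_mul, ENNReal.coe_mul, ← enorm_eq_nnnorm, ← enorm_eq_nnnorm,
      Real.enorm_eq_ofReal (by positivity), Real.enorm_eq_ofReal (Real.exp_nonneg _),
      mul_assoc]
  have hIg : (∫⁻ y, (‖((4 * π * t) ^ (-(n : ℝ) / 2) *
          Real.exp (-‖x - y‖ ^ 2 / (4 * t))) • f y‖₊ : ℝ≥0∞))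
      = ENNReal.ofReal ((4*π*t) ^ (-(n:ℝ)/2)) * J := by
    simp only [hg_norm]
    rw [hJdef, lintegral_const_mul _ (by exact hker.mul hh)]
  -- exponent abbreviation
  have hsp : Real.sqrt t ^ ((n:ℝ)-1) = t ^ (((n:ℝ)-1)/2) := by
    rw [Real.sqrt_eq_rpow, ← Real.rpow_mul ht.le]
    congr 1; ring
  -- main bound on J
  have hJ : J ≤ V * MorreyNorm n f * ENNReal.ofReal (t ^ (((n:ℝ)-1)/2) * S) := by
    have hmeas_ind : ∀ (r : ℝ),
        Measurable ((Metric.ball x r).indicator (fun y' => (‖f y'‖₊ : ℝ≥0∞))) :=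
      fun r => hh.indicator measurableSet_ball
    have step1 : J ≤ ∫⁻ y, ((Metric.ball x (Real.sqrt t)).indicator (fun _ => (1:ℝ≥0∞)) y +
        ∑' k : ℕ, ENNReal.ofReal (Real.exp (-((4:ℝ)^k)/4)) *
          (Metric.ball x ((2:ℝ)^(k+1) * Real.sqrt t)).indicator (fun _ => (1:ℝ≥0∞)) y)
            * ‖f y‖₊ :=
      lintegral_mono fun y => mul_le_mul_left (kernel_pointwise n ht x y) _
    have hpt : ∀ y, ((Metric.ball x (Real.sqrt t)).indicator (fun _ => (1:ℝ≥0∞)) y +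
        ∑' k : ℕ, ENNReal.ofReal (Real.exp (-((4:ℝ)^k)/4)) *
          (Metric.ball x ((2:ℝ)^(k+1) * Real.sqrt t)).indicator (fun _ => (1:ℝ≥0∞)) y)
            * (‖f y‖₊ : ℝ≥0∞)
        = (Metric.ball x (Real.sqrt t)).indicator (fun y' => (‖f y'‖₊ : ℝ≥0∞)) y +
          ∑' k : ℕ, ENNReal.ofReal (Real.exp (-((4:ℝ)^k)/4)) *
            (Metric.ball x ((2:ℝ)^(k+1) * Real.sqrt t)).indicator
              (fun y' => (‖f y'‖₊ : ℝ≥0∞)) y := by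
      intro y
      rw [add_mul, ← ENNReal.tsum_mul_right]
      congr 1
      · by_cases hy : y ∈ Metric.ball x (Real.sqrt t) <;>
          simp [Set.indicator_of_mem, Set.indicator_of_notMem, hy]
      · refine tsum_congr fun k => ?_
        by_cases hy : y ∈ Metric.ball x ((2:ℝ)^(k+1) * Real.sqrt t) <;>
          simp [Set.indicator_of_mem, Set.indicator_of_notMem, hy, mul_assoc]
    have step2 : (∫⁻ y, ((Metric.ball x (Real.sqrt t)).indicator (fun _ => (1:ℝ≥0∞)) y +
        ∑' k : ℕ, ENNReal.ofReal (Real.exp (-((4:ℝ)^k)/4)) *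
          (Metric.ball x ((2:ℝ)^(k+1) * Real.sqrt t)).indicator (fun _ => (1:ℝ≥0∞)) y)
            * ‖f y‖₊)
        = (∫⁻ y in Metric.ball x (Real.sqrt t), ‖f y‖₊) +
          ∑' k : ℕ, ENNReal.ofReal (Real.exp (-((4:ℝ)^k)/4)) *
            ∫⁻ y in Metric.ball x ((2:ℝ)^(k+1) * Real.sqrt t), ‖f y‖₊ := by
      simp only [hpt]
      rw [lintegral_add_left (hmeas_ind _), lintegral_indicator measurableSet_ball,
        lintegral_tsum (fun k => ((hmeas_ind _).const_mul _).aemeasurable)]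
      congr 1
      refine tsum_congr fun k => ?_
      rw [lintegral_const_mul _ (hmeas_ind _), lintegral_indicator measurableSet_ball]
    have hb1 := morrey_ball_l1 n f hfm hs x
    have hb2 : ∀ k:ℕ, (∫⁻ y in Metric.ball x ((2:ℝ)^(k+1) * Real.sqrt t), (‖f y‖₊ : ℝ≥0∞)) ≤
        V * ENNReal.ofReal (((2:ℝ)^(k+1) * Real.sqrt t) ^ ((n:ℝ)-1)) * MorreyNorm n f :=
      fun k => morrey_ball_l1 n f hfm (by positivity) x
    have hterm : ∀ k:ℕ, ENNReal.ofReal (Real.exp (-((4:ℝ)^k)/4)) *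
        (V * ENNReal.ofReal (((2:ℝ)^(k+1) * Real.sqrt t) ^ ((n:ℝ)-1)) * MorreyNorm n f)
        ≤ (V * MorreyNorm n f * ENNReal.ofReal (D * t ^ (((n:ℝ)-1)/2))) *
            ENNReal.ofReal ((2⁻¹:ℝ)^k) := by
      intro k
      have h1 : Real.exp (-((4:ℝ)^k)/4) * (((2:ℝ)^(k+1) * Real.sqrt t) ^ ((n:ℝ)-1))
          ≤ (D * t ^ (((n:ℝ)-1)/2)) * (2⁻¹:ℝ)^k := by
        rw [Real.mul_rpow (by positivity) (Real.sqrt_nonneg t), hsp, ← mul_assoc]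
        exact (mul_le_mul_of_nonneg_right (series_term_bound n hn k)
          (by positivity)).trans_eq (by ring)
      have h2 : ENNReal.ofReal (Real.exp (-((4:ℝ)^k)/4)) *
          (V * ENNReal.ofReal (((2:ℝ)^(k+1) * Real.sqrt t) ^ ((n:ℝ)-1)) * MorreyNorm n f)
          = (V * MorreyNorm n f) * ENNReal.ofReal (Real.exp (-((4:ℝ)^k)/4) *
              (((2:ℝ)^(k+1) * Real.sqrt t) ^ ((n:ℝ)-1))) := by
        rw [ENNReal.ofReal_mul (Real.exp_nonneg _)]; ring
      rw [h2, mul_assoc (V * MorreyNorm n f) (ENNReal.ofReal (D * t ^ (((n:ℝ)-1)/2)))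
        (ENNReal.ofReal ((2⁻¹:ℝ)^k)),
        ← ENNReal.ofReal_mul (by positivity : (0:ℝ) ≤ D * t ^ (((n:ℝ)-1)/2))]
      exact mul_le_mul_right (ENNReal.ofReal_le_ofReal h1) _
    have hsum : (∑' k : ℕ, ENNReal.ofReal (Real.exp (-((4:ℝ)^k)/4)) *
          ∫⁻ y in Metric.ball x ((2:ℝ)^(k+1) * Real.sqrt t), (‖f y‖₊ : ℝ≥0∞))
        ≤ (V * MorreyNorm n f * ENNReal.ofReal (D * t ^ (((n:ℝ)-1)/2))) * 2 := by
      calc (∑' k : ℕ, ENNReal.ofReal (Real.exp (-((4:ℝ)^k)/4)) *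
            ∫⁻ y in Metric.ball x ((2:ℝ)^(k+1) * Real.sqrt t), (‖f y‖₊ : ℝ≥0∞))
          ≤ ∑' k : ℕ, (V * MorreyNorm n f * ENNReal.ofReal (D * t ^ (((n:ℝ)-1)/2))) *
              ENNReal.ofReal ((2⁻¹:ℝ)^k) :=
            ENNReal.tsum_le_tsum fun k =>
              le_trans (mul_le_mul_right (hb2 k) _) (hterm k)
        _ = (V * MorreyNorm n f * ENNReal.ofReal (D * t ^ (((n:ℝ)-1)/2))) *
              ∑' k : ℕ, ENNReal.ofReal ((2⁻¹:ℝ)^k) := ENNReal.tsum_mul_left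
        _ = _ := by rw [geo_half_sum]
    calc J ≤ _ := step1
      _ = _ := step2
      _ ≤ (V * ENNReal.ofReal (Real.sqrt t ^ ((n:ℝ)-1)) * MorreyNorm n f) +
            (V * MorreyNorm n f * ENNReal.ofReal (D * t ^ (((n:ℝ)-1)/2))) * 2 :=
          add_le_add hb1 hsum
      _ = V * MorreyNorm n f * (ENNReal.ofReal (t ^ (((n:ℝ)-1)/2)) +
            ENNReal.ofReal (D * t ^ (((n:ℝ)-1)/2)) * 2) := by rw [hsp]; ring
      _ = V * MorreyNorm n f * ENNReal.ofReal (t ^ (((n:ℝ)-1)/2) * S) := by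
          congr 1
          rw [show (2:ℝ≥0∞) = ENNReal.ofReal 2 by simp,
            ← ENNReal.ofReal_mul (by positivity), ← ENNReal.ofReal_add (by positivity)
              (by positivity)]
          congr 1
          rw [hS]; ring
  -- real-exponent bookkeeping
  have hre : (4*π*t) ^ (-(n:ℝ)/2) = (4*π) ^ (-(n:ℝ)/2) * t ^ (-(n:ℝ)/2) :=
    Real.mul_rpow hπ.le ht.le
  have ht2 : t ^ (-(n:ℝ)/2) * t ^ (((n:ℝ)-1)/2) = t ^ (-(1:ℝ)/2) := by
    rw [← Real.rpow_add ht]; congr 1; ring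
  have hreal : (4*π*t) ^ (-(n:ℝ)/2) * Vr * (t ^ (((n:ℝ)-1)/2) * S)
      = Vr * ((4*π) ^ (-(n:ℝ)/2) * S) * t ^ (-(1:ℝ)/2) := by
    rw [hre, ← ht2]; ring
  have hfinal : ENNReal.ofReal ((4*π*t) ^ (-(n:ℝ)/2)) *
        (V * MorreyNorm n f * ENNReal.ofReal (t ^ (((n:ℝ)-1)/2) * S))
      = ENNReal.ofReal (Vr * ((4*π) ^ (-(n:ℝ)/2) * S) * t ^ (-(1:ℝ)/2)) * MorreyNorm n f := by
    rw [hVeq, ← hreal,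
      ENNReal.ofReal_mul (show (0:ℝ) ≤ (4*π*t) ^ (-(n:ℝ)/2) * Vr by positivity),
      ENNReal.ofReal_mul (show (0:ℝ) ≤ (4*π*t) ^ (-(n:ℝ)/2) by positivity),
      ENNReal.ofReal_mul (show (0:ℝ) ≤ t ^ (((n:ℝ)-1)/2) by positivity)]
    ring
  have hbound : (∫⁻ y, (‖((4 * π * t) ^ (-(n : ℝ) / 2) *
          Real.exp (-‖x - y‖ ^ 2 / (4 * t))) • f y‖₊ : ℝ≥0∞))
      ≤ ENNReal.ofReal (Vr * ((4*π) ^ (-(n:ℝ)/2) * S) * t ^ (-(1:ℝ)/2)) * MorreyNorm n f := by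
    rw [hIg, ← hfinal]
    exact mul_le_mul_right hJ _
  have hgmeas : Measurable fun y => ((4 * π * t) ^ (-(n : ℝ) / 2) *
      Real.exp (-‖x - y‖ ^ 2 / (4 * t))) • f y :=
    ((continuous_const.mul hker_cont).measurable).smul hfm
  constructor
  · refine ⟨hgmeas.aestronglyMeasurable, ?_⟩
    refine lt_of_le_of_lt hbound ?_
    exact ENNReal.mul_lt_top ENNReal.ofReal_lt_top (lt_top_iff_ne_top.mpr hM)
  · exact le_trans (enorm_integral_le_lintegral_enorm _) hbound
end
end

section
/- Let n ≥ 2, α ∈ [0,1) and p > n with n > αp. There is a constant C = C(n,p,α) > 0 with the following property: if f : ℝⁿ → ℂ is measurable, its heat extension e^{tΔ}f is defined a.e. for every t > 0, and A = sup_{t>0} t^{(p−n)/(2p)} ‖e^{tΔ}f‖_{L^p(ℝⁿ)} < ∞, then ‖f‖_{Q_α^{-1}} ≤ C A. In particular the homogeneous Besov space Ḃ_{p,∞}^{−1+n/p} embeds into Q_α^{-1}. -/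
open MeasureTheory Metric Real
open scoped ENNReal NNReal

noncomputable section

/-- The `Q_α^{-1}` norm of `f`. -/
def QinvNorm (n : ℕ) (α : ℝ) (f : EuclideanSpace ℝ (Fin n) → ℂ) : ℝ≥0∞ :=
  ⨆ (r : ℝ) (_ : 0 < r) (x : EuclideanSpace ℝ (Fin n)),
    (ENNReal.ofReal (r ^ (2 * α - (n : ℝ))) *
      ∫⁻ t in Set.Ioo (0 : ℝ) (r ^ 2),
        (∫⁻ y in Metric.ball x r, (‖heatExt n f t y‖₊ : ℝ≥0∞) ^ 2) *
          ENNReal.ofReal (t ^ (-α))) ^ (1 / 2 : ℝ)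

lemma heatExt_measurable (n : ℕ) (f : EuclideanSpace ℝ (Fin n) → ℂ) (t : ℝ)
    (hf : Measurable f) : Measurable (heatExt n f t) := by
  have h : Measurable fun q : EuclideanSpace ℝ (Fin n) × EuclideanSpace ℝ (Fin n) =>
      ((4 * π * t) ^ (-(n : ℝ) / 2) * Real.exp (-‖q.1 - q.2‖ ^ 2 / (4 * t))) • f q.2 := by
    apply Measurable.fun_smul
    · exact (continuous_const.mul (((continuous_fst.sub continuous_snd).norm.pow 2).neg.div_const
        (4 * t)).rexp).measurable
    · exact hf.comp measurable_snd
  exact h.stronglyMeasurable.integral_prod_right'.measurable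

lemma ball_lintegral_sq_le (n : ℕ) (u : EuclideanSpace ℝ (Fin n) → ℂ) (hu : Measurable u)
    (p : ℝ) (hp : 2 < p) (s : Set (EuclideanSpace ℝ (Fin n))) :
    ∫⁻ y in s, (‖u y‖₊ : ℝ≥0∞) ^ 2 ≤
      (eLpNorm u (ENNReal.ofReal p) volume) ^ 2 * (volume s) ^ (1 - 2 / p) := by
  set ν := volume.restrict s
  have hPto : (ENNReal.ofReal p).toReal = p := ENNReal.toReal_ofReal (by linarith)
  have h2P : (2 : ℝ≥0∞) ≤ ENNReal.ofReal p := by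
    rw [show (2:ℝ≥0∞) = ENNReal.ofReal 2 by norm_num]
    exact ENNReal.ofReal_le_ofReal hp.le
  have heq : ∫⁻ y in s, (‖u y‖₊ : ℝ≥0∞) ^ 2 = (eLpNorm u 2 ν) ^ 2 := by
    rw [eLpNorm_eq_lintegral_rpow_enorm_toReal (by norm_num) (by norm_num)]
    rw [← ENNReal.rpow_natCast _ 2, ← ENNReal.rpow_mul]
    norm_num
    rfl
  rw [heq]
  have h1 : eLpNorm u 2 ν ≤ eLpNorm u (ENNReal.ofReal p) ν * (ν Set.univ) ^ (1/(2:ℝ) - 1/p) := by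
    have := eLpNorm_le_eLpNorm_mul_rpow_measure_univ (μ := ν) h2P hu.aestronglyMeasurable
    simpa [hPto] using this
  have h2 : eLpNorm u (ENNReal.ofReal p) ν ≤ eLpNorm u (ENNReal.ofReal p) volume :=
    eLpNorm_mono_measure _ Measure.restrict_le_self
  calc (eLpNorm u 2 ν) ^ 2
      ≤ (eLpNorm u (ENNReal.ofReal p) volume * (ν Set.univ) ^ (1/(2:ℝ) - 1/p)) ^ 2 := by
        exact pow_le_pow_left' (h1.trans (by gcongr)) 2
    _ = (eLpNorm u (ENNReal.ofReal p) volume) ^ 2 * (volume s) ^ (1 - 2/p) := by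
        rw [mul_pow, Measure.restrict_apply_univ, ← ENNReal.rpow_natCast (_ ^ _) 2,
          ← ENNReal.rpow_mul]
        norm_num
        ring_nf

lemma lintegral_Ioo_rpow (β R : ℝ) (hβ : -1 < β) (hR : 0 < R) :
    ∫⁻ t in Set.Ioo (0:ℝ) R, ENNReal.ofReal (t ^ β) =
      ENNReal.ofReal (R ^ (β + 1) / (β + 1)) := by
  have hint : IntegrableOn (fun t => t ^ β) (Set.Ioo (0:ℝ) R) := by
    have := (intervalIntegral.intervalIntegrable_rpow' (a := 0) (b := R) hβ)
    rw [intervalIntegrable_iff, Set.uIoc_of_le hR.le] at this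
    exact this.mono_set Set.Ioo_subset_Ioc_self
  rw [← ofReal_integral_eq_lintegral_ofReal hint]
  · congr 1
    rw [← MeasureTheory.integral_Ioc_eq_integral_Ioo,
      ← intervalIntegral.integral_of_le hR.le, integral_rpow (Or.inl hβ)]
    rw [Real.zero_rpow (by linarith)]
    ring
  · filter_upwards [self_mem_ae_restrict (measurableSet_Ioo)] with t ht
    exact Real.rpow_nonneg ht.1.le β

/-- The homogeneous Besov space `Ḃ_{p,∞}^{−1+n/p}`, characterized by
`A = sup_{t>0} t^{(p−n)/(2p)} ‖e^{tΔ}f‖_{L^p} < ∞`, embeds into `Q_α^{-1}`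
when `p > n > αp`, `α ∈ [0,1)`. -/
theorem besov_subset_Qinv (n : ℕ) (hn : 2 ≤ n) (α : ℝ) (hα0 : 0 ≤ α) (hα1 : α < 1)
    (p : ℝ) (hp : (n : ℝ) < p) (hαp : α * p < (n : ℝ)) :
    ∃ C > (0 : ℝ), ∀ f : EuclideanSpace ℝ (Fin n) → ℂ,
      Measurable f →
      (∀ t > (0 : ℝ), ∀ᵐ x : EuclideanSpace ℝ (Fin n),
        Integrable (fun y =>
          ((4 * π * t) ^ (-(n : ℝ) / 2) * Real.exp (-‖x - y‖ ^ 2 / (4 * t))) • f y)) →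
      ∀ A : ℝ≥0∞,
        A = (⨆ (t : ℝ) (_ : 0 < t),
          ENNReal.ofReal (t ^ ((p - (n : ℝ)) / (2 * p))) *
            eLpNorm (heatExt n f t) (ENNReal.ofReal p) volume) →
        A ≠ ⊤ →
        QinvNorm n α f ≤ ENNReal.ofReal C * A := by
  have hn0 : (0:ℝ) < n := by positivity
  have hp0 : (0:ℝ) < p := lt_trans hn0 hp
  have hp2 : (2:ℝ) < p := by
    have : (2:ℝ) ≤ n := by exact_mod_cast hn
    linarith
  -- constants
  set β : ℝ := (n:ℝ)/p - α - 1 with hβdef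
  have hβ : -1 < β := by
    have : α < (n:ℝ)/p := (lt_div_iff₀ hp0).mpr hαp
    simp only [hβdef]; linarith
  have hβ1 : 0 < β + 1 := by linarith
  set v : ℝ≥0∞ := volume (Metric.ball (0 : EuclideanSpace ℝ (Fin n)) 1) with hvdef
  have hv0 : v ≠ 0 := (measure_ball_pos _ _ one_pos).ne'
  have hvt : v ≠ ⊤ := measure_ball_lt_top.ne
  have hexp : (0:ℝ) ≤ 1 - 2/p := by
    have : 2/p < 1 := (div_lt_one hp0).mpr hp2
    linarith
  set c : ℝ := (v ^ (1 - 2/p)).toReal with hcdef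
  have hvc : v ^ (1 - 2/p) = ENNReal.ofReal c := by
    rw [hcdef, ENNReal.ofReal_toReal (ENNReal.rpow_ne_top_of_nonneg hexp hvt)]
  have hc0 : 0 < c := by
    rw [hcdef]
    apply ENNReal.toReal_pos
    · simp [ENNReal.rpow_eq_zero_iff, hv0, hvt]
    · exact ENNReal.rpow_ne_top_of_nonneg hexp hvt
  refine ⟨Real.sqrt (c / (β + 1)), Real.sqrt_pos.mpr (by positivity), ?_⟩
  intro f hf _ A hA hAtop
  set C := Real.sqrt (c / (β + 1)) with hCdef
  have hC0 : 0 < C := Real.sqrt_pos.mpr (by positivity)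
  have hCsq : C ^ 2 = c / (β + 1) := Real.sq_sqrt (by positivity)
  -- the key per-(r,x) bound
  rw [QinvNorm]
  refine iSup_le fun r => iSup_le fun hr => iSup_le fun x => ?_
  have hball : volume (Metric.ball x r) = ENNReal.ofReal (r ^ n) * v := by
    rw [hvdef, Measure.addHaar_ball_of_pos _ _ hr, finrank_euclideanSpace_fin]
  -- step 1: the eLpNorm bound from A
  have hE : ∀ t : ℝ, 0 < t →
      eLpNorm (heatExt n f t) (ENNReal.ofReal p) volume ≤
        A * ENNReal.ofReal (t ^ (-((p - (n:ℝ)) / (2 * p)))) := by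
    intro t ht
    set e : ℝ := (p - (n:ℝ)) / (2 * p)
    have hte : 0 < t ^ e := Real.rpow_pos_of_pos ht e
    have hle : ENNReal.ofReal (t ^ e) * eLpNorm (heatExt n f t) (ENNReal.ofReal p) volume ≤ A := by
      rw [hA]
      exact le_iSup₂ (f := fun (t : ℝ) (_ : 0 < t) =>
        ENNReal.ofReal (t ^ ((p - (n : ℝ)) / (2 * p))) *
          eLpNorm (heatExt n f t) (ENNReal.ofReal p) volume) t ht
    have hc0' : ENNReal.ofReal (t ^ e) ≠ 0 := by simp [ENNReal.ofReal_eq_zero, not_le, hte]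
    have hct : ENNReal.ofReal (t ^ e) ≠ ⊤ := ENNReal.ofReal_ne_top
    have : eLpNorm (heatExt n f t) (ENNReal.ofReal p) volume ≤
        (ENNReal.ofReal (t ^ e))⁻¹ * A := by
      calc eLpNorm (heatExt n f t) (ENNReal.ofReal p) volume
          = (ENNReal.ofReal (t ^ e))⁻¹ *
            (ENNReal.ofReal (t ^ e) * eLpNorm (heatExt n f t) (ENNReal.ofReal p) volume) := by
            rw [← mul_assoc, ENNReal.inv_mul_cancel hc0' hct, one_mul]
        _ ≤ _ := mul_le_mul_right hle _
    rw [← ENNReal.ofReal_inv_of_pos hte, ← Real.rpow_neg ht.le] at this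
    exact this.trans_eq (mul_comm _ _)
  -- step 2: bound the inner double integral
  set V13 : ℝ≥0∞ := (ENNReal.ofReal (r ^ n) * v) ^ (1 - 2/p) with hV13
  have hV13top : V13 ≠ ⊤ := by
    apply ENNReal.rpow_ne_top_of_nonneg hexp
    exact ENNReal.mul_ne_top ENNReal.ofReal_ne_top hvt
  have hIbound : (∫⁻ t in Set.Ioo (0 : ℝ) (r ^ 2),
        (∫⁻ y in Metric.ball x r, (‖heatExt n f t y‖₊ : ℝ≥0∞) ^ 2) *
          ENNReal.ofReal (t ^ (-α))) ≤
      A ^ 2 * V13 * ENNReal.ofReal ((r^2) ^ (β + 1) / (β + 1)) := by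
    have hmono : ∀ t ∈ Set.Ioo (0 : ℝ) (r ^ 2),
        (∫⁻ y in Metric.ball x r, (‖heatExt n f t y‖₊ : ℝ≥0∞) ^ 2) *
          ENNReal.ofReal (t ^ (-α)) ≤
        A ^ 2 * V13 * ENNReal.ofReal (t ^ β) := by
      intro t ht
      have ht0 : 0 < t := ht.1
      have h1 := ball_lintegral_sq_le n (heatExt n f t) (heatExt_measurable n f t hf) p hp2
        (Metric.ball x r)
      rw [hball] at h1
      have h2 := hE t ht0
      calc (∫⁻ y in Metric.ball x r, (‖heatExt n f t y‖₊ : ℝ≥0∞) ^ 2) *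
            ENNReal.ofReal (t ^ (-α))
          ≤ ((A * ENNReal.ofReal (t ^ (-((p - (n:ℝ)) / (2 * p))))) ^ 2 * V13) *
            ENNReal.ofReal (t ^ (-α)) := by
            refine mul_le_mul_left (h1.trans ?_) _
            exact mul_le_mul_left (pow_le_pow_left' h2 2) _
        _ = A ^ 2 * V13 * ((ENNReal.ofReal (t ^ (-((p - (n:ℝ)) / (2 * p))))) ^ 2 *
            ENNReal.ofReal (t ^ (-α))) := by ring
        _ = A ^ 2 * V13 * ENNReal.ofReal (t ^ β) := by
            congr 1
            rw [← ENNReal.ofReal_pow (Real.rpow_nonneg ht0.le _),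
              ← Real.rpow_natCast (t ^ _) 2, ← Real.rpow_mul ht0.le,
              ← ENNReal.ofReal_mul (Real.rpow_nonneg ht0.le _),
              ← Real.rpow_add ht0]
            congr 2
            rw [hβdef]
            field_simp
            ring
    calc (∫⁻ t in Set.Ioo (0 : ℝ) (r ^ 2),
          (∫⁻ y in Metric.ball x r, (‖heatExt n f t y‖₊ : ℝ≥0∞) ^ 2) *
            ENNReal.ofReal (t ^ (-α)))
        ≤ ∫⁻ t in Set.Ioo (0 : ℝ) (r ^ 2), A ^ 2 * V13 * ENNReal.ofReal (t ^ β) := by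
          refine setLIntegral_mono ?_ hmono
          fun_prop
      _ = A ^ 2 * V13 * ∫⁻ t in Set.Ioo (0 : ℝ) (r ^ 2), ENNReal.ofReal (t ^ β) := by
          rw [lintegral_const_mul']
          exact ENNReal.mul_ne_top (ENNReal.pow_ne_top hAtop) hV13top
      _ = A ^ 2 * V13 * ENNReal.ofReal ((r^2) ^ (β + 1) / (β + 1)) := by
          rw [lintegral_Ioo_rpow β (r^2) hβ (by positivity)]
  -- step 3: combine with the r-power prefactor
  have hmain : ENNReal.ofReal (r ^ (2 * α - (n : ℝ))) *
      (∫⁻ t in Set.Ioo (0 : ℝ) (r ^ 2),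
        (∫⁻ y in Metric.ball x r, (‖heatExt n f t y‖₊ : ℝ≥0∞) ^ 2) *
          ENNReal.ofReal (t ^ (-α))) ≤ A ^ 2 * ENNReal.ofReal (C ^ 2) := by
    refine le_trans (mul_le_mul_right hIbound _) ?_
    have hVsplit : V13 = ENNReal.ofReal ((r ^ n : ℝ) ^ (1 - 2/p)) * ENNReal.ofReal c := by
      rw [hV13, ENNReal.mul_rpow_of_nonneg _ _ hexp, hvc,
        ENNReal.ofReal_rpow_of_pos (by positivity)]
    rw [hVsplit]
    have : ENNReal.ofReal (r ^ (2 * α - (n : ℝ))) *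
        (A ^ 2 * (ENNReal.ofReal ((r ^ n : ℝ) ^ (1 - 2/p)) * ENNReal.ofReal c) *
          ENNReal.ofReal ((r^2) ^ (β + 1) / (β + 1))) =
        A ^ 2 * (ENNReal.ofReal (r ^ (2 * α - (n : ℝ))) *
          ENNReal.ofReal ((r ^ n : ℝ) ^ (1 - 2/p)) * ENNReal.ofReal ((r^2) ^ (β + 1)) *
          ENNReal.ofReal (c / (β + 1))) := by
      rw [show ((r:ℝ)^2) ^ (β + 1) / (β + 1) = (r^2) ^ (β+1) * ((β+1)⁻¹) by ring,
        ENNReal.ofReal_mul (by positivity), show c / (β+1) = c * (β+1)⁻¹ by ring,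
        ENNReal.ofReal_mul hc0.le]
      ring
    rw [this]
    have hrpow : ENNReal.ofReal (r ^ (2 * α - (n : ℝ))) *
        ENNReal.ofReal ((r ^ n : ℝ) ^ (1 - 2/p)) * ENNReal.ofReal ((r^2) ^ (β + 1)) = 1 := by
      rw [← ENNReal.ofReal_mul (by positivity), ← ENNReal.ofReal_mul (by positivity)]
      rw [← Real.rpow_natCast r n, ← Real.rpow_natCast r 2,
        ← Real.rpow_mul hr.le, ← Real.rpow_mul hr.le,
        ← Real.rpow_add hr, ← Real.rpow_add hr]
      have : 2 * α - (n:ℝ) + (n:ℝ) * (1 - 2/p) + 2 * (β + 1) = 0 := by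
        rw [hβdef]; field_simp; ring
      push_cast
      rw [this, Real.rpow_zero, ENNReal.ofReal_one]
    rw [hrpow, one_mul, hCsq]
  -- step 4: take square roots
  calc (ENNReal.ofReal (r ^ (2 * α - (n : ℝ))) *
        (∫⁻ t in Set.Ioo (0 : ℝ) (r ^ 2),
          (∫⁻ y in Metric.ball x r, (‖heatExt n f t y‖₊ : ℝ≥0∞) ^ 2) *
            ENNReal.ofReal (t ^ (-α)))) ^ (1 / 2 : ℝ)
      ≤ (A ^ 2 * ENNReal.ofReal (C ^ 2)) ^ (1 / 2 : ℝ) := by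
        exact ENNReal.rpow_le_rpow hmain (by norm_num)
    _ = ENNReal.ofReal C * A := by
        rw [ENNReal.mul_rpow_of_nonneg _ _ (by norm_num),
          ← ENNReal.rpow_natCast A 2, ← ENNReal.rpow_mul,
          ENNReal.ofReal_rpow_of_pos (by positivity),
          ← Real.rpow_natCast C 2, ← Real.rpow_mul hC0.le]
        norm_num [mul_comm]
end
end
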